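/- Let C be a nonempty compact convex subset of a Banach space E and {T(t) : t ≥ 0} a one-parameter strongly continuous semigroup of nonexpansive mappings on C. Let {t_n} ⊆ (0,∞) with t_n → ∞ and t_{n+1}/t_n → 1, {α_n} ⊆ [0,1] with 0 < liminf α_n ≤ limsup α_n < 1, and define x_{n+1} = (α_n/t_n) ∫_0^{t_n} T(s) x_n ds + (1 − α_n) x_n starting from x_1 ∈ C. Then {x_n} converges strongly to a common fixed point of {T(t) : t ≥ 0}. -/

import Mathlib

open Filter MeasureTheory intervalIntegral

private lemma arithD (b θ : ℝ) (hb0 : 0 ≤ b) (hbpos : 0 < 1 - b) (hθ0 : 0 ≤ θ) (i : ℕ) :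
    (θ * i * ((1-b)⁻¹)^i + θ)/(1-b) ≤ θ * (i+1) * ((1-b)⁻¹)^(i+1) := by
  have h1 : (1:ℝ) ≤ (1-b)⁻¹ := by
    rw [le_inv_comm₀ one_pos hbpos, inv_one]; linarith
  have hβ : (1:ℝ) ≤ (1-b)⁻¹ ^ i := one_le_pow₀ h1
  rw [div_le_iff₀ hbpos]
  have expand : θ * ((i:ℝ)+1) * (1-b)⁻¹^(i+1) * (1-b) = θ * ((i:ℝ)+1) * (1-b)⁻¹^i := by
    rw [pow_succ]; field_simp
  rw [expand]
  have h5 : θ * ((i:ℝ) + 1) * (1-b)⁻¹^i = θ*(i:ℝ)*(1-b)⁻¹^i + θ*(1-b)⁻¹^i := by ring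
  have h4 : θ ≤ θ * (1-b)⁻¹^i := le_mul_of_one_le_right hθ0 hβ
  rw [h5]
  linarith

private lemma arithDk (cb b δ ρ : ℝ) (k : ℕ) (hcb : 0 < cb) (hb0 : 0 ≤ b) (hb1 : b < 1)
    (hδ0 : 0 ≤ δ) (hδρ : δ ≤ ρ) (hρ : ρ = cb * (1-b)^k / (100*((k:ℝ)+1)^2))
    (i : ℕ) (hik : i ≤ k) :
    (b*(2*δ + k*ρ) + ρ) * i * ((1-b)⁻¹)^i ≤ cb/8 := by
  have hbpos : 0 < 1 - b := by linarith
  have hρ0 : 0 ≤ ρ := le_trans hδ0 hδρ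
  have h1 : (1:ℝ) ≤ (1-b)⁻¹ := by
    rw [le_inv_comm₀ one_pos hbpos, inv_one]; linarith
  set θ : ℝ := b*(2*δ + k*ρ) + ρ with hθdef
  have hθ0 : 0 ≤ θ := by positivity
  have hX : 0 ≤ 2*δ + (k:ℝ)*ρ := by positivity
  have hθle : θ ≤ ((k:ℝ)+3) * ρ := by
    have e1 : 2*δ + (k:ℝ)*ρ ≤ ((k:ℝ)+2)*ρ := by nlinarith
    have e2 : b * (2*δ + (k:ℝ)*ρ) ≤ 2*δ + (k:ℝ)*ρ := by nlinarith
    have e3 : ((k:ℝ)+3)*ρ = ((k:ℝ)+2)*ρ + ρ := by ring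
    linarith
  have h2 : ((1-b)⁻¹)^i ≤ ((1-b)⁻¹)^k := pow_le_pow_right₀ h1 hik
  have hterm0 : 0 ≤ θ * (i:ℝ) := by positivity
  have h3 : θ * (i:ℝ) * ((1-b)⁻¹)^i ≤ θ * (k:ℝ) * ((1-b)⁻¹)^k := by
    apply mul_le_mul
    · exact mul_le_mul_of_nonneg_left (by exact_mod_cast hik) hθ0
    · exact h2
    · positivity
    · positivity
  have hpkpos : (0:ℝ) < (1-b)^k := pow_pos hbpos k
  have h4 : θ * (k:ℝ) * ((1-b)⁻¹)^k ≤ (((k:ℝ)+3) * ρ) * (k:ℝ) * ((1-b)⁻¹)^k := by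
    have : (0:ℝ) ≤ (k:ℝ) * ((1-b)⁻¹)^k := by positivity
    calc θ * (k:ℝ) * ((1-b)⁻¹)^k = θ * ((k:ℝ) * ((1-b)⁻¹)^k) := by ring
      _ ≤ (((k:ℝ)+3) * ρ) * ((k:ℝ) * ((1-b)⁻¹)^k) := mul_le_mul_of_nonneg_right hθle this
      _ = (((k:ℝ)+3) * ρ) * (k:ℝ) * ((1-b)⁻¹)^k := by ring
  have h5 : (((k:ℝ)+3) * ρ) * (k:ℝ) * ((1-b)⁻¹)^k = ((k:ℝ)+3) * (k:ℝ) * (cb / (100*((k:ℝ)+1)^2)) := by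
    rw [hρ, inv_pow]
    have hk1 : ((k:ℝ)+1)^2 ≠ 0 := by positivity
    field_simp
  have h6 : ((k:ℝ)+3) * (k:ℝ) * (cb / (100*((k:ℝ)+1)^2)) ≤ cb/8 := by
    have e0 : ((k:ℝ)+3) * (k:ℝ) * (cb / (100*((k:ℝ)+1)^2))
        = (((k:ℝ)+3) * (k:ℝ) * cb) / (100*((k:ℝ)+1)^2) := by ring
    rw [e0, div_le_div_iff₀ (by positivity) (by norm_num)]
    have hk0 : (0:ℝ) ≤ (k:ℝ) := Nat.cast_nonneg k
    nlinarith [mul_le_mul_of_nonneg_right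
      (show ((k:ℝ)+3) * (k:ℝ) ≤ 12*((k:ℝ)+1)^2 by nlinarith) hcb.le]
  calc θ * (i:ℝ) * ((1-b)⁻¹)^i ≤ θ * (k:ℝ) * ((1-b)⁻¹)^k := h3
    _ ≤ (((k:ℝ)+3) * ρ) * (k:ℝ) * ((1-b)⁻¹)^k := h4
    _ = ((k:ℝ)+3) * (k:ℝ) * (cb / (100*((k:ℝ)+1)^2)) := h5
    _ ≤ cb/8 := h6

set_option maxHeartbeats 1600000 in
/-- Mann-iteration residual lemma: residuals `‖y n - x n‖` are frequently small. -/
lemma mann_frequently_small {E : Type*} [NormedAddCommGroup E] [NormedSpace ℝ E]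
    (x y : ℕ → E) (α c : ℕ → ℝ) (M a b : ℝ) (n0 : ℕ)
    (ha : 0 < a) (hb : b < 1)
    (hab : ∀ n, n0 ≤ n → a ≤ α n ∧ α n ≤ b)
    (hMx : ∀ n, n0 ≤ n → ‖x n‖ ≤ M)
    (hMy : ∀ n, n0 ≤ n → ‖y n‖ ≤ M)
    (hn0 : 1 ≤ n0)
    (hrec : ∀ n, 1 ≤ n → x (n+1) = α n • y n + (1 - α n) • x n)
    (hdrift : ∀ n, n0 ≤ n → ‖y (n+1) - y n‖ ≤ ‖x (n+1) - x n‖ + c n)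
    (hc0 : ∀ n, 0 ≤ c n)
    (hc : Tendsto c atTop (nhds 0)) :
    ∀ ε > 0, ∀ N : ℕ, ∃ n, N ≤ n ∧ n0 ≤ n ∧ ‖y n - x n‖ < ε := by
  intro ε hε N
  by_contra hcon
  push_neg at hcon
  set r : ℕ → ℝ := fun n => ‖y n - x n‖ with hr
  have hrge : ∀ n, max N n0 ≤ n → ε ≤ r n := by
    intro n hn
    have h1 : N ≤ n := le_trans (le_max_left _ _) hn
    have h2 : n0 ≤ n := le_trans (le_max_right _ _) hn
    have := hcon n h1 h2
    linarith
  have hrpos : ∀ n, 0 ≤ r n := fun n => norm_nonneg _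
  set M₀ : ℝ := max M 1 with hM₀
  have hM₀1 : (1:ℝ) ≤ M₀ := le_max_right _ _
  have hM₀0 : (0:ℝ) < M₀ := lt_of_lt_of_le one_pos hM₀1
  have hMM₀ : M ≤ M₀ := le_max_left _ _
  have hrle : ∀ n, n0 ≤ n → r n ≤ 2 * M₀ := by
    intro n hn
    have := norm_sub_le (y n) (x n)
    have h1 := hMx n hn
    have h2 := hMy n hn
    simp only [hr]
    linarith
  have hbddle : IsBoundedUnder (· ≤ ·) atTop r := by
    apply isBoundedUnder_of_eventually_le (a := 2 * M₀)
    filter_upwards [eventually_ge_atTop n0] with n hn using hrle n hn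
  have hbddge : IsBoundedUnder (· ≥ ·) atTop r :=
    isBoundedUnder_of_eventually_le (α := ℝᵒᵈ) (Eventually.of_forall hrpos)
  have hcobdd : IsCoboundedUnder (· ≥ ·) atTop r := hbddle.isCoboundedUnder_flip
  set cb : ℝ := liminf r atTop with hcb
  have hcbge : ε ≤ cb := by
    apply le_liminf_of_le hcobdd
    filter_upwards [eventually_ge_atTop (max N n0)] with n hn using hrge n hn
  have hcbpos : 0 < cb := lt_of_lt_of_le hε hcbge
  obtain ⟨k, hk⟩ := exists_nat_gt ((2 * M₀ + 1) / (a * (cb / 4)))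
  have hk' : 2 * M₀ + 1 < k * (a * (cb / 4)) := by
    have hpos : 0 < a * (cb / 4) := by positivity
    calc 2 * M₀ + 1 = (2 * M₀ + 1) / (a * (cb / 4)) * (a * (cb / 4)) := by field_simp
      _ < k * (a * (cb / 4)) := by apply mul_lt_mul_of_pos_right hk hpos
  have hbpos : 0 < 1 - b := by linarith
  have hb0 : 0 ≤ b := le_trans (le_trans ha.le (hab n0 le_rfl).1) (hab n0 le_rfl).2
  set ρ : ℝ := cb * (1-b)^k / (100*((k:ℝ)+1)^2) with hρdef
  have hρpos : 0 < ρ := by positivity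
  set δ : ℝ := min (cb/8) ρ with hδdef
  have hδpos : 0 < δ := lt_min (by positivity) hρpos
  have hδ8 : δ ≤ cb / 8 := min_le_left _ _
  have hδρ : δ ≤ ρ := min_le_right _ _
  set θ : ℝ := b * (2*δ + k*ρ) + ρ with hθdef
  have hθ0 : 0 ≤ θ := by positivity
  set Dd : ℕ → ℝ := fun i => θ * i * ((1-b)⁻¹)^i with hDd
  have hDnonneg : ∀ i, 0 ≤ Dd i := by
    intro i
    have : (0:ℝ) < ((1-b)⁻¹)^i := by positivity
    positivity
  have hDk : ∀ i, i ≤ k → Dd i ≤ cb / 8 := by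
    intro i hik
    exact arithDk cb b δ ρ k hcbpos hb0 hb hδpos.le hδρ hρdef i hik
  -- thresholds
  obtain ⟨N₃, hN₃⟩ : ∃ N₃, ∀ n, N₃ ≤ n → c n ≤ ρ := by
    have h := hc.eventually (eventually_le_nhds hρpos)
    obtain ⟨N₃, hN₃⟩ := eventually_atTop.mp h
    exact ⟨N₃, hN₃⟩
  obtain ⟨N₄, hN₄⟩ : ∃ N₄, ∀ n, N₄ ≤ n → cb - δ < r n := by
    have h := eventually_lt_of_lt_liminf (show cb - δ < cb by linarith) hbddge
    obtain ⟨N₄, hN₄⟩ := eventually_atTop.mp h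
    exact ⟨N₄, hN₄⟩
  set N₂ : ℕ := max (max N n0) (max N₃ N₄) with hN₂
  have hfreq : ∃ᶠ n in atTop, r n < cb + δ :=
    frequently_lt_of_liminf_lt hcobdd (by linarith)
  obtain ⟨j, hjN₂, hjr⟩ := (frequently_atTop.mp hfreq) N₂
  have hjn0 : n0 ≤ j := le_trans (le_trans (le_max_right _ _) (le_max_left _ _)) hjN₂
  have hjN₃ : N₃ ≤ j := le_trans (le_trans (le_max_left _ _) (le_max_right _ _)) hjN₂
  have hjN₄ : N₄ ≤ j := le_trans (le_trans (le_max_right _ _) (le_max_right _ _)) hjN₂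
  set m : ℕ := j + k with hm
  -- step facts
  have hYstep : ∀ n, n0 ≤ n → ‖y (n+1) - y n‖ ≤ α n * r n + c n := by
    intro n hn
    have h1 : 1 ≤ n := le_trans hn0 hn
    have hxid : x (n+1) - x n = α n • (y n - x n) := by rw [hrec n h1]; module
    have := hdrift n hn
    rw [hxid, norm_smul] at this
    have hα0 : 0 ≤ α n := le_trans ha.le (hab n hn).1
    rw [Real.norm_eq_abs, abs_of_nonneg hα0] at this
    exact this
  have hrstep : ∀ n, n0 ≤ n → r (n+1) ≤ r n + c n := by
    intro n hn
    have h1 : 1 ≤ n := le_trans hn0 hn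
    have hid : y (n+1) - x (n+1) = (y (n+1) - y n) + (1 - α n) • (y n - x n) := by
      rw [hrec n h1]; module
    have h2 := hYstep n hn
    have hα1 : α n ≤ b := (hab n hn).2
    have h3 : ‖(1 - α n) • (y n - x n)‖ = (1 - α n) * r n := by
      rw [norm_smul, Real.norm_eq_abs, abs_of_nonneg (by linarith)]
    have h4 : r (n+1) ≤ ‖y (n+1) - y n‖ + ‖(1 - α n) • (y n - x n)‖ := by
      simp only [hr, hid]
      exact norm_add_le _ _
    have hα0 : 0 ≤ α n := le_trans ha.le (hab n hn).1
    have hrn := hrpos n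
    rw [h3] at h4
    have e : (1 - α n) * r n = r n - α n * r n := by ring
    linarith
  have hrl : ∀ d : ℕ, d ≤ k → r (j + d) ≤ r j + d * ρ := by
    intro d hd
    induction d with
    | zero => simp
    | succ d ih =>
      have ih' := ih (by omega)
      have h1 : n0 ≤ j + d := by omega
      have h2 := hrstep (j + d) h1
      have h3 : c (j + d) ≤ ρ := hN₃ (j + d) (by omega)
      have h4 : j + (d + 1) = (j + d) + 1 := by omega
      rw [h4]
      push_cast
      nlinarith
  -- norming functional
  have hrmlb : cb - δ < r m := hN₄ m (by omega)
  have hrm0 : 0 < r m := by linarith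
  have hne0 : y m - x m ≠ 0 := by
    intro h
    simp only [hr] at hrm0
    rw [h, norm_zero] at hrm0
    exact lt_irrefl _ hrm0
  obtain ⟨f, hf1, hf2⟩ := exists_dual_vector ℝ (y m - x m) (norm_ne_zero_iff.mpr hne0)
  have hf2' : f (y m - x m) = r m := by
    simpa using hf2
  have hfle : ∀ u : E, f u ≤ ‖u‖ := by
    intro u
    calc f u ≤ |f u| := le_abs_self _
      _ = ‖f u‖ := (Real.norm_eq_abs _).symm
      _ ≤ ‖f‖ * ‖u‖ := f.le_opNorm u
      _ = ‖u‖ := by rw [hf1, one_mul]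
  set φ : ℕ → ℝ := fun l => f (y l - x l) with hφ
  -- main induction
  have hmain : ∀ i, i ≤ k → (cb - δ) - Dd i ≤ φ (j + (k - i)) := by
    intro i
    induction i with
    | zero =>
      intro _
      have h1 : j + (k - 0) = m := by omega
      rw [h1]
      have h2 : φ m = r m := hf2'
      have h3 : Dd 0 = 0 := by simp [hDd]
      rw [h2, h3]
      linarith
    | succ i ih =>
      intro hik
      have IH := ih (by omega)
      set l : ℕ := j + (k - (i+1)) with hl
      have hl1 : l + 1 = j + (k - i) := by omega
      have hln0 : n0 ≤ l := by omega
      have h1 : 1 ≤ l := le_trans hn0 hln0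
      have hid : y (l+1) - x (l+1) = (y (l+1) - y l) + (1 - α l) • (y l - x l) := by
        rw [hrec l h1]; module
      have hφrec : φ (l+1) = f (y (l+1) - y l) + (1 - α l) * φ l := by
        simp only [hφ]
        rw [hid, map_add, _root_.map_smul, smul_eq_mul]
      have h2 := hYstep l hln0
      have h3 : φ (l+1) ≤ (α l * r l + c l) + (1 - α l) * φ l := by
        have := hfle (y (l+1) - y l)
        rw [hφrec]
        linarith
      have hrlb : r l ≤ cb + δ + k * ρ := by
        have h5 := hrl (k - (i+1)) (by omega)
        have h6 : ((k - (i+1) : ℕ) : ℝ) ≤ (k:ℝ) := by exact_mod_cast Nat.sub_le _ _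
        have h7 : ((k - (i+1) : ℕ) : ℝ) * ρ ≤ (k:ℝ) * ρ := mul_le_mul_of_nonneg_right h6 hρpos.le
        have : j + (k - (i+1)) = l := rfl
        rw [this] at h5
        linarith
      have hcl : c l ≤ ρ := hN₃ l (by omega)
      have hαl := hab l hln0
      have hIH' : (cb - δ) - Dd i ≤ φ (l + 1) := by rw [hl1]; exact IH
      -- key inequality
      have hα0 : 0 ≤ α l := le_trans ha.le hαl.1
      have hkey : (1 - α l) * (cb - δ) - (Dd i + θ) ≤ (1 - α l) * φ l := by
        have e1 : α l * r l ≤ α l * (cb + δ + k * ρ) := mul_le_mul_of_nonneg_left hrlb hα0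
        have e2 : α l * (2*δ + k*ρ) ≤ b * (2*δ + k*ρ) := by
          apply mul_le_mul_of_nonneg_right hαl.2
          positivity
        have e3 : α l * (cb + δ + k * ρ) = α l * (cb - δ) + α l * (2*δ + k*ρ) := by ring
        have e4 : (1 - α l) * (cb - δ) = (cb - δ) - α l * (cb - δ) := by ring
        have := h3
        simp only [hθdef]
        linarith
      have hαb1 : 0 < 1 - α l := by linarith [hαl.2]
      have hX0 : 0 ≤ Dd i + θ := by positivity
      have hdiv1 : (cb - δ) - φ l ≤ (Dd i + θ) / (1 - α l) := by
        rw [le_div_iff₀ hαb1]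
        have e : ((cb-δ) - φ l) * (1-α l) = (1-α l)*(cb-δ) - (1-α l)*φ l := by ring
        linarith
      have hdiv2 : (Dd i + θ) / (1 - α l) ≤ (Dd i + θ) / (1 - b) := by
        apply div_le_div_of_nonneg_left hX0 hbpos
        linarith [hαl.2]
      have hDdsucc : Dd (i+1) = θ * ((i:ℝ)+1) * ((1-b)⁻¹)^(i+1) := by
        simp only [hDd]; push_cast; ring
      have hDdi : Dd i = θ * (i:ℝ) * ((1-b)⁻¹)^i := rfl
      have hdiv3 : (Dd i + θ) / (1 - b) ≤ Dd (i+1) := by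
        rw [hDdsucc, hDdi]
        exact arithD b θ hb0 hbpos hθ0 i
      have : (cb - δ) - Dd (i+1) ≤ φ l := by linarith
      exact this
  -- telescope
  have htel : ∀ d : ℕ, x (j + d) - x j = ∑ i ∈ Finset.range d, α (j+i) • (y (j+i) - x (j+i)) := by
    intro d
    induction d with
    | zero => simp
    | succ d ih =>
      have h1 : 1 ≤ j + d := by omega
      have hxid : x ((j+d)+1) - x (j+d) = α (j+d) • (y (j+d) - x (j+d)) := by
        rw [hrec _ h1]; module
      have h2 : j + (d+1) = (j + d) + 1 := by omega
      rw [h2, Finset.sum_range_succ, ← ih]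
      calc x ((j+d)+1) - x j = (x (j+d) - x j) + (x ((j+d)+1) - x (j+d)) := by abel
        _ = (x (j+d) - x j) + α (j+d) • (y (j+d) - x (j+d)) := by rw [hxid]
  have hsum : f (x m - x j) = ∑ i ∈ Finset.range k, α (j+i) * φ (j+i) := by
    rw [hm, htel k, map_sum]
    apply Finset.sum_congr rfl
    intro i _
    rw [_root_.map_smul, smul_eq_mul]
  have hterm : ∀ i ∈ Finset.range k, a * (cb/2) ≤ α (j+i) * φ (j+i) := by
    intro i hi
    have hik : i < k := Finset.mem_range.mp hi
    have h1 := hmain (k - i) (by omega)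
    have h2 : j + (k - (k - i)) = j + i := by omega
    rw [h2] at h1
    have hDi : Dd (k - i) ≤ cb/8 := hDk (k - i) (by omega)
    have hφge : cb/2 ≤ φ (j+i) := by linarith
    have hα := hab (j+i) (by omega)
    have hα0 : 0 ≤ α (j+i) := le_trans ha.le hα.1
    exact mul_le_mul hα.1 hφge (by linarith) hα0
  have hbig : (k:ℝ) * (a * (cb/2)) ≤ f (x m - x j) := by
    rw [hsum]
    calc (k:ℝ) * (a*(cb/2)) = ∑ _i ∈ Finset.range k, a*(cb/2) := by
          rw [Finset.sum_const, Finset.card_range, nsmul_eq_mul]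
      _ ≤ ∑ i ∈ Finset.range k, α (j+i) * φ (j+i) := Finset.sum_le_sum hterm
  have hfy : f (y m - x j) = r m + f (x m - x j) := by
    have : y m - x j = (y m - x m) + (x m - x j) := by abel
    rw [this, map_add, hf2']
  have hupper : f (y m - x j) ≤ 2 * M₀ := by
    calc f (y m - x j) ≤ ‖y m - x j‖ := hfle _
      _ ≤ ‖y m‖ + ‖x j‖ := norm_sub_le _ _
      _ ≤ M + M := add_le_add (hMy m (by omega)) (hMx j hjn0)
      _ ≤ 2 * M₀ := by linarith
  have hhalf : (k:ℝ) * (a * (cb/4)) ≤ (k:ℝ) * (a * (cb/2)) := by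
    apply mul_le_mul_of_nonneg_left _ (Nat.cast_nonneg k)
    nlinarith
  linarith [hrpos m]


set_option maxHeartbeats 1600000 in
/-- Core dynamical lemma: if the Cesàro means of the orbit of `w` converge to `w`
along some sequence of times tending to infinity, then `w` is a common fixed point. -/
lemma core_fixed {E : Type*} [NormedAddCommGroup E] [NormedSpace ℝ E] [CompleteSpace E]
    (C : Set E) (hCcpt : IsCompact C)
    (T : ℝ → E → E)
    (hmaps : ∀ t : ℝ, 0 ≤ t → Set.MapsTo (T t) C C)
    (hne : ∀ t : ℝ, 0 ≤ t → ∀ x ∈ C, ∀ y ∈ C, ‖T t x - T t y‖ ≤ ‖x - y‖)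
    (hsg : ∀ s t : ℝ, 0 ≤ s → 0 ≤ t → ∀ x ∈ C, T (s + t) x = T s (T t x))
    (hcont : ∀ x ∈ C, ContinuousOn (fun t : ℝ => T t x) (Set.Ici 0))
    (w : E) (hw : w ∈ C)
    (s : ℕ → ℝ) (hs0 : ∀ k, 0 < s k) (hsinf : Tendsto s atTop atTop)
    (hmean : Tendsto (fun k => (s k)⁻¹ • ∫ u in (0:ℝ)..s k, T u w) atTop (nhds w)) :
    ∀ t : ℝ, 0 ≤ t → T t w = w := by
  -- bound on C
  obtain ⟨M, hM⟩ := hCcpt.isBounded.exists_norm_le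
  have hM0 : 0 ≤ M := le_trans (norm_nonneg w) (hM w hw)
  -- the orbit
  set g : ℝ → E := fun u => T u w with hg
  have hgC : ∀ u : ℝ, 0 ≤ u → g u ∈ C := fun u hu => hmaps u hu hw
  have hgcont : ContinuousOn g (Set.Ici 0) := hcont w hw
  have hgint : ∀ a b : ℝ, 0 ≤ a → 0 ≤ b → IntervalIntegrable g volume a b := by
    intro a b ha hb
    apply ContinuousOn.intervalIntegrable
    apply hgcont.mono
    intro u hu
    rcases le_total a b with h | h
    · rw [Set.uIcc_of_le h] at hu; exact le_trans ha hu.1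
    · rw [Set.uIcc_of_ge h] at hu; exact le_trans hb hu.1
  set F : ℝ → ℝ := fun u => ‖g u - w‖ with hF
  have hFcont : ContinuousOn F (Set.Ici 0) := (hgcont.sub continuousOn_const).norm
  have hF0 : ∀ u : ℝ, 0 ≤ F u := fun u => norm_nonneg _
  have hF2M : ∀ u : ℝ, 0 ≤ u → F u ≤ 2 * M := by
    intro u hu
    have h1 := hM (g u) (hgC u hu)
    have h2 := hM w hw
    calc F u ≤ ‖g u‖ + ‖w‖ := norm_sub_le _ _
      _ ≤ 2 * M := by linarith
  have hFint : ∀ a b : ℝ, 0 ≤ a → 0 ≤ b → IntervalIntegrable F volume a b := by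
    intro a b ha hb
    apply ContinuousOn.intervalIntegrable
    apply hFcont.mono
    intro u hu
    rcases le_total a b with h | h
    · rw [Set.uIcc_of_le h] at hu; exact le_trans ha hu.1
    · rw [Set.uIcc_of_ge h] at hu; exact le_trans hb hu.1
  -- key: distances to later orbit points
  have hFkey : ∀ u v : ℝ, 0 ≤ u → u ≤ v → ‖g v - g u‖ ≤ F (v - u) := by
    intro u v hu huv
    have ha : (0:ℝ) ≤ v - u := by linarith
    have e1 : g v = T u (g (v - u)) := by
      have := hsg u (v - u) hu ha w hw
      rw [hg]
      simp only []
      rw [show u + (v - u) = v by ring] at this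
      exact this
    have e2 : g u = T u (T 0 w) := by
      have := hsg u 0 hu le_rfl w hw
      rw [hg]
      simp only []
      rw [show u + 0 = u by ring] at this
      exact this
    have e3 : T 0 w ∈ C := hmaps 0 le_rfl hw
    have e4 := hne u hu (g (v-u)) (hgC _ ha) (T 0 w) e3
    have e5 : g (v - u) = T 0 (g (v - u)) := by
      have := hsg 0 (v - u) le_rfl ha w hw
      rw [hg]
      simp only []
      rw [show (0:ℝ) + (v - u) = v - u by ring] at this
      exact this
    have e6 := hne 0 le_rfl (g (v-u)) (hgC _ ha) w hw
    calc ‖g v - g u‖ = ‖T u (g (v-u)) - T u (T 0 w)‖ := by rw [← e1, ← e2]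
      _ ≤ ‖g (v-u) - T 0 w‖ := e4
      _ = ‖T 0 (g (v-u)) - T 0 w‖ := by rw [← e5]
      _ ≤ ‖g (v-u) - w‖ := e6
      _ = F (v - u) := rfl
  -- monotonicity of orbit distances under time shift
  have hanti : ∀ σ a b : ℝ, 0 ≤ σ → 0 ≤ a → 0 ≤ b →
      ‖g (σ + a) - g (σ + b)‖ ≤ ‖g a - g b‖ := by
    intro σ a b hσ ha hb
    have e1 : g (σ + a) = T σ (g a) := by
      have := hsg σ a hσ ha w hw; rw [hg]; exact this
    have e2 : g (σ + b) = T σ (g b) := by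
      have := hsg σ b hσ hb w hw; rw [hg]; exact this
    rw [e1, e2]
    exact hne σ hσ (g a) (hgC a ha) (g b) (hgC b hb)
  -- choose a limit point of the orbit along integer times
  obtain ⟨z, hzC, ψ, hψmono, hψlim⟩ := hCcpt.tendsto_subseq
    (x := fun j : ℕ => g (j : ℝ)) (fun j => hgC _ (Nat.cast_nonneg j))
  set t : ℕ → ℝ := fun j => ((ψ j : ℕ) : ℝ) with ht
  have ht0 : ∀ j, 0 ≤ t j := fun j => Nat.cast_nonneg _
  have htinf : Tendsto t atTop atTop :=
    tendsto_natCast_atTop_atTop.comp hψmono.tendsto_atTop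
  set δ : ℕ → ℝ := fun j => ‖g (t j) - z‖ with hδ
  have hδ0 : ∀ j, 0 ≤ δ j := fun j => norm_nonneg _
  have hδlim : Tendsto δ atTop (nhds 0) := by
    have h1 := tendsto_iff_dist_tendsto_zero.mp hψlim
    simp only [Function.comp, dist_eq_norm] at h1
    exact h1
  -- the asymptotic orbit
  set h : ℝ → E := fun u => T u z with hh
  have hhC : ∀ u : ℝ, 0 ≤ u → h u ∈ C := fun u hu => hmaps u hu hzC
  have hhcont : ContinuousOn h (Set.Ici 0) := hcont z hzC
  have hhint : ∀ a b : ℝ, 0 ≤ a → 0 ≤ b → IntervalIntegrable h volume a b := by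
    intro a b ha hb
    apply ContinuousOn.intervalIntegrable
    apply hhcont.mono
    intro u hu
    rcases le_total a b with hab | hab
    · rw [Set.uIcc_of_le hab] at hu; exact le_trans ha hu.1
    · rw [Set.uIcc_of_ge hab] at hu; exact le_trans hb hu.1
  -- tracking
  have htrack : ∀ j, ∀ u : ℝ, 0 ≤ u → ‖g (t j + u) - h u‖ ≤ δ j := by
    intro j u hu
    have e1 : g (t j + u) = T u (g (t j)) := by
      have := hsg u (t j) hu (ht0 j) w hw
      rw [hg]
      simp only []
      rw [show u + t j = t j + u by ring] at this
      exact this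
    rw [e1]
    exact hne u hu (g (t j)) (hgC _ (ht0 j)) z hzC
  -- asymptotic distance function
  set lam : ℝ → ℝ := fun v => ‖h v - h 0‖ with hlam
  have hlam00 : lam 0 = 0 := by simp [hlam]
  have hlamnn : ∀ v, 0 ≤ lam v := fun v => norm_nonneg _
  have hlamcont : ContinuousOn lam (Set.Ici 0) := (hhcont.sub continuousOn_const).norm
  have hlamint : ∀ a b : ℝ, 0 ≤ a → 0 ≤ b → IntervalIntegrable lam volume a b := by
    intro a b ha hb
    apply ContinuousOn.intervalIntegrable
    apply hlamcont.mono
    intro u hu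
    rcases le_total a b with hab | hab
    · rw [Set.uIcc_of_le hab] at hu; exact le_trans ha hu.1
    · rw [Set.uIcc_of_ge hab] at hu; exact le_trans hb hu.1
  -- lam is below all shifted orbit distances
  have hlamle : ∀ σ v : ℝ, 0 ≤ σ → 0 ≤ v → lam v ≤ ‖g (σ + v) - g σ‖ := by
    intro σ v hσ hv
    have hev : ∀ᶠ j in atTop, lam v ≤ ‖g (σ + v) - g σ‖ + 2 * δ j := by
      filter_upwards [htinf.eventually_ge_atTop σ] with j hj
      have h1 : ‖g (t j + v) - g (t j)‖ ≤ ‖g (σ + v) - g σ‖ := by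
        have := hanti (t j - σ) (σ + v) σ (by linarith) (by linarith) hσ
        rw [show t j - σ + (σ + v) = t j + v by ring,
            show t j - σ + σ = t j by ring] at this
        exact this
      have h2 := htrack j v hv
      have h3 := htrack j 0 le_rfl
      rw [add_zero] at h3
      have h4 : lam v ≤ ‖g (t j + v) - g (t j)‖ + δ j + δ j := by
        have e1 : ‖h v - h 0‖ ≤ ‖h v - g (t j + v)‖ + ‖g (t j + v) - h 0‖ :=
          norm_sub_le_norm_sub_add_norm_sub _ _ _
        have e2 : ‖g (t j + v) - h 0‖ ≤ ‖g (t j + v) - g (t j)‖ + ‖g (t j) - h 0‖ :=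
          norm_sub_le_norm_sub_add_norm_sub _ _ _
        have e3 : ‖h v - g (t j + v)‖ ≤ δ j := by rw [norm_sub_rev]; exact h2
        calc lam v = ‖h v - h 0‖ := rfl
          _ ≤ ‖h v - g (t j + v)‖ + ‖g (t j + v) - h 0‖ := e1
          _ ≤ δ j + (‖g (t j + v) - g (t j)‖ + ‖g (t j) - h 0‖) := by linarith
          _ ≤ ‖g (t j + v) - g (t j)‖ + δ j + δ j := by linarith
      linarith [h1, h4]
    have hlim : Tendsto (fun j => ‖g (σ + v) - g σ‖ + 2 * δ j) atTop
        (nhds (‖g (σ + v) - g σ‖)) := by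
      have : Tendsto (fun j => 2 * δ j) atTop (nhds 0) := by
        simpa using hδlim.const_mul 2
      simpa using (tendsto_const_nhds (x := ‖g (σ + v) - g σ‖)).add this
    exact ge_of_tendsto hlim hev
  -- lam below F
  have hlamF : ∀ v : ℝ, 0 ≤ v → lam v ≤ F v := by
    intro v hv
    have h1 := hlamle 0 v le_rfl hv
    have h2 : ‖g (0 + v) - g 0‖ ≤ F (v - 0) := by
      refine hFkey 0 (0 + v) le_rfl (by linarith) |>.trans ?_
      rw [show (0:ℝ) + v - 0 = v - 0 by ring]
    rw [show v - 0 = v by ring] at h2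
    exact h1.trans h2
  -- exact screw property of h
  have hscrew : ∀ u v : ℝ, 0 ≤ u → 0 ≤ v → ‖h u - h (u + v)‖ = lam v := by
    intro u v hu hv
    have hge : lam v ≤ ‖h u - h (u + v)‖ := by
      have hev : ∀ᶠ j in atTop, lam v ≤ ‖h u - h (u + v)‖ + 2 * δ j := by
        filter_upwards [eventually_ge_atTop 0] with j _
        have h1 := hlamle (t j + u) v (by linarith [ht0 j]) hv
        have h2 := htrack j u hu
        have h3 := htrack j (u + v) (by linarith)
        have e1 : ‖g (t j + u + v) - g (t j + u)‖
            ≤ ‖g (t j + u + v) - h (u+v)‖ + ‖h (u+v) - h u‖ + ‖h u - g (t j + u)‖ := by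
          have a1 := norm_sub_le_norm_sub_add_norm_sub (g (t j + u + v)) (h (u+v)) (g (t j + u))
          have a2 := norm_sub_le_norm_sub_add_norm_sub (h (u+v)) (h u) (g (t j + u))
          linarith
        have e2 : ‖g (t j + u + v) - h (u+v)‖ ≤ δ j := by
          have := htrack j (u + v) (by linarith)
          rw [show t j + (u + v) = t j + u + v by ring] at this
          exact this
        have e3 : ‖h u - g (t j + u)‖ ≤ δ j := by rw [norm_sub_rev]; exact h2
        have e4 : ‖h (u+v) - h u‖ = ‖h u - h (u+v)‖ := norm_sub_rev _ _
        have h5 : lam v ≤ ‖g ((t j + u) + v) - g (t j + u)‖ := h1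
        rw [show t j + u + v = (t j + u) + v by ring] at e1
        linarith
      have hlim : Tendsto (fun j => ‖h u - h (u + v)‖ + 2 * δ j) atTop
          (nhds (‖h u - h (u + v)‖)) := by
        have : Tendsto (fun j => 2 * δ j) atTop (nhds 0) := by
          simpa using hδlim.const_mul 2
        simpa using (tendsto_const_nhds (x := ‖h u - h (u + v)‖)).add this
      exact ge_of_tendsto hlim hev
    have hle : ‖h u - h (u + v)‖ ≤ lam v := by
      -- step 1: for every j', eventually in j
      have step1 : ∀ j' : ℕ, ‖h u - h (u + v)‖ ≤ lam v + 2 * δ j' := by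
        intro j'
        have hev : ∀ᶠ j in atTop, ‖h u - h (u + v)‖ ≤ lam v + 2 * δ j' + 2 * δ j := by
          filter_upwards [htinf.eventually_ge_atTop (t j')] with j hj
          have e2 : ‖g (t j + u + v) - h (u+v)‖ ≤ δ j := by
            have := htrack j (u + v) (by linarith)
            rw [show t j + (u + v) = t j + u + v by ring] at this
            exact this
          have e3 : ‖g (t j + u) - h u‖ ≤ δ j := htrack j u hu
          have e5 : ‖g (t j + u + v) - g (t j + u)‖ ≤ ‖g (t j' + v) - g (t j')‖ := by
            have := hanti (t j + u - t j') (t j' + v) (t j') (by linarith [ht0 j']) (by linarith [ht0 j', hv]) (ht0 j')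
            rw [show t j + u - t j' + (t j' + v) = t j + u + v by ring,
                show t j + u - t j' + t j' = t j + u by ring] at this
            exact this
          have e6 : ‖g (t j' + v) - g (t j')‖ ≤ lam v + 2 * δ j' := by
            have f1 := htrack j' v hv
            have f2 := htrack j' 0 le_rfl
            rw [add_zero] at f2
            have a1 := norm_sub_le_norm_sub_add_norm_sub (g (t j' + v)) (h v) (g (t j'))
            have a2 := norm_sub_le_norm_sub_add_norm_sub (h v) (h 0) (g (t j'))
            have a3 : ‖g (t j' + v) - h v‖ ≤ δ j' := htrack j' v hv
            have a4 : ‖h 0 - g (t j')‖ ≤ δ j' := by rw [norm_sub_rev]; exact f2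
            have : ‖h v - h 0‖ = lam v := rfl
            linarith
          have a1 := norm_sub_le_norm_sub_add_norm_sub (h u) (g (t j + u)) (h (u+v))
          have a2 := norm_sub_le_norm_sub_add_norm_sub (g (t j + u)) (g (t j + u + v)) (h (u+v))
          have a3 : ‖h u - g (t j + u)‖ ≤ δ j := by rw [norm_sub_rev]; exact e3
          have a4 : ‖g (t j + u) - g (t j + u + v)‖ = ‖g (t j + u + v) - g (t j + u)‖ :=
            norm_sub_rev _ _
          linarith
        have hlim : Tendsto (fun j => lam v + 2 * δ j' + 2 * δ j) atTop
            (nhds (lam v + 2 * δ j')) := by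
          have : Tendsto (fun j => 2 * δ j) atTop (nhds 0) := by
            simpa using hδlim.const_mul 2
          simpa using (tendsto_const_nhds (x := lam v + 2 * δ j')).add this
        exact ge_of_tendsto hlim hev
      have hlim : Tendsto (fun j' => lam v + 2 * δ j') atTop (nhds (lam v)) := by
        have : Tendsto (fun j' => 2 * δ j') atTop (nhds 0) := by
          simpa using hδlim.const_mul 2
        simpa using (tendsto_const_nhds (x := lam v)).add this
      exact ge_of_tendsto hlim (Eventually.of_forall step1)
    linarith
  -- subadditivity
  have hlamsub : ∀ a b : ℝ, 0 ≤ a → 0 ≤ b → lam (a + b) ≤ lam a + lam b := by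
    intro a b ha hb
    have h1 : ‖h b - h (b + a)‖ = lam a := hscrew b a hb ha
    have h2 : ‖h (a+b) - h 0‖ ≤ ‖h (a+b) - h b‖ + ‖h b - h 0‖ :=
      norm_sub_le_norm_sub_add_norm_sub _ _ _
    have h3 : ‖h (a+b) - h b‖ = ‖h b - h (b+a)‖ := by
      rw [norm_sub_rev, show a + b = b + a by ring]
    calc lam (a+b) = ‖h (a+b) - h 0‖ := rfl
      _ ≤ ‖h (a+b) - h b‖ + ‖h b - h 0‖ := h2
      _ = lam a + lam b := by rw [h3, h1]
  -- continuity at 0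
  have hlamcont0 : ∀ ε : ℝ, 0 < ε → ∃ η : ℝ, 0 < η ∧ ∀ v, 0 ≤ v → v ≤ η → lam v ≤ ε := by
    intro ε hε
    have hc0 : ContinuousWithinAt h (Set.Ici 0) 0 := hhcont 0 (by simp)
    rw [ContinuousWithinAt, Metric.tendsto_nhdsWithin_nhds] at hc0
    obtain ⟨η, hη, hη2⟩ := hc0 ε hε
    refine ⟨η/2, by positivity, ?_⟩
    intro v hv hvη
    have h1 : dist v 0 < η := by
      rw [Real.dist_eq, sub_zero, abs_of_nonneg hv]; linarith
    have h2 := hη2 (Set.mem_Ici.mpr hv) h1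
    rw [dist_eq_norm] at h2
    exact le_of_lt h2
  -- relatively dense small values of lam
  have hrel : ∀ ε : ℝ, 0 < ε → ∃ ℓ : ℝ, 0 < ℓ ∧
      ∀ A : ℝ, 0 ≤ A → ∃ τ, A ≤ τ ∧ τ ≤ A + ℓ ∧ lam τ ≤ ε := by
    intro ε hε
    obtain ⟨P, hPfin, hPcov⟩ := (Metric.totallyBounded_iff.mp hCcpt.totallyBounded)
      (ε/2) (by positivity)
    classical
    set time : E → ℝ := fun yy =>
      if hy : ∃ u : ℝ, 0 ≤ u ∧ h u ∈ Metric.ball yy (ε/2) then hy.choose else 0 with htime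
    obtain ⟨B, hB⟩ := (hPfin.image time).bddAbove
    refine ⟨max B 0 + 1, by positivity, ?_⟩
    intro A hA
    set uu : ℝ := A + (max B 0 + 1) with huu
    have huu0 : 0 ≤ uu := by positivity
    have h1 : h uu ∈ C := hhC uu huu0
    have h2 := hPcov h1
    rw [Set.mem_iUnion₂] at h2
    obtain ⟨yy, hyyP, hyyball⟩ := h2
    have hex : ∃ u : ℝ, 0 ≤ u ∧ h u ∈ Metric.ball yy (ε/2) := ⟨uu, huu0, hyyball⟩
    have htimeyy : 0 ≤ time yy ∧ h (time yy) ∈ Metric.ball yy (ε/2) := by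
      rw [htime]
      simp only [dif_pos hex]
      exact hex.choose_spec
    have htyB : time yy ≤ max B 0 := by
      have : time yy ∈ time '' P := Set.mem_image_of_mem _ hyyP
      exact le_trans (hB this) (le_max_left _ _)
    set τ : ℝ := uu - time yy with hτ
    have hτ0 : 0 ≤ τ := by
      rw [hτ, huu]
      linarith
    refine ⟨τ, ?_, ?_, ?_⟩
    · rw [hτ, huu]; linarith [htimeyy.1]
    · rw [hτ, huu]; linarith [htimeyy.1]
    · have hd : dist (h (time yy)) (h uu) < ε := by
        have d1 := Metric.mem_ball.mp htimeyy.2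
        have d2 := Metric.mem_ball.mp hyyball
        calc dist (h (time yy)) (h uu) ≤ dist (h (time yy)) yy + dist yy (h uu) :=
          dist_triangle _ _ _
          _ < ε := by rw [dist_comm yy (h uu)]; linarith
      have hs : ‖h (time yy) - h (time yy + τ)‖ = lam τ := hscrew (time yy) τ htimeyy.1 hτ0
      rw [show time yy + τ = uu by rw [hτ]; ring] at hs
      rw [← hs]
      rw [← dist_eq_norm]
      exact le_of_lt hd
  -- distance bound in C
  have hCdist : ∀ p ∈ C, ∀ q ∈ C, ‖p - q‖ ≤ 2*M := by
    intro p hp q hq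
    calc ‖p - q‖ ≤ ‖p‖ + ‖q‖ := norm_sub_le _ _
      _ ≤ 2*M := by linarith [hM p hp, hM q hq]
  have hlam2M : ∀ v : ℝ, 0 ≤ v → lam v ≤ 2*M :=
    fun v hv => hCdist (h v) (hhC v hv) (h 0) (hhC 0 le_rfl)
  have hmean' : Tendsto (fun k => (s k)⁻¹ • ∫ u in (0:ℝ)..s k, g u) atTop (nhds w) := hmean
  -- averages
  set A : ℕ → ℝ := fun k => (s k)⁻¹ * ∫ u in (0:ℝ)..s k, F u with hA
  set Lm : ℕ → ℝ := fun k => (s k)⁻¹ * ∫ u in (0:ℝ)..s k, lam u with hLm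
  have hAmem : ∀ k, A k ∈ Set.Icc (0:ℝ) (2*M) := by
    intro k
    have hsk := hs0 k
    constructor
    · apply mul_nonneg (by positivity)
      apply intervalIntegral.integral_nonneg hsk.le
      intro u _; exact hF0 u
    · have h1 : (∫ u in (0:ℝ)..s k, F u) ≤ ∫ _u in (0:ℝ)..s k, 2*M := by
        apply integral_mono_on hsk.le (hFint 0 (s k) le_rfl hsk.le)
          intervalIntegrable_const
        intro u hu; exact hF2M u hu.1
      rw [intervalIntegral.integral_const, smul_eq_mul, sub_zero] at h1
      rw [hA]
      calc (s k)⁻¹ * ∫ u in (0:ℝ)..s k, F u ≤ (s k)⁻¹ * (s k * (2*M)) := by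
            apply mul_le_mul_of_nonneg_left h1 (by positivity)
        _ = 2*M := by field_simp
  have hLmmem : ∀ k, Lm k ∈ Set.Icc (0:ℝ) (2*M) := by
    intro k
    have hsk := hs0 k
    constructor
    · apply mul_nonneg (by positivity)
      apply intervalIntegral.integral_nonneg hsk.le
      intro u _; exact hlamnn u
    · have h1 : (∫ u in (0:ℝ)..s k, lam u) ≤ ∫ _u in (0:ℝ)..s k, 2*M := by
        apply integral_mono_on hsk.le (hlamint 0 (s k) le_rfl hsk.le)
          intervalIntegrable_const
        intro u hu; exact hlam2M u hu.1
      rw [intervalIntegral.integral_const, smul_eq_mul, sub_zero] at h1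
      rw [hLm]
      calc (s k)⁻¹ * ∫ u in (0:ℝ)..s k, lam u ≤ (s k)⁻¹ * (s k * (2*M)) := by
            apply mul_le_mul_of_nonneg_left h1 (by positivity)
        _ = 2*M := by field_simp
  -- extract subsequences so that both averages converge
  obtain ⟨L, hLmem, φ₁, hφ₁, hφ₁lim⟩ :=
    tendsto_subseq_of_bounded (Metric.isBounded_Icc (a := (0:ℝ)) (b := 2*M)) hAmem
  obtain ⟨cbar, hcbarmem, φ₂, hφ₂, hφ₂lim⟩ :=
    tendsto_subseq_of_bounded (Metric.isBounded_Icc (a := (0:ℝ)) (b := 2*M)) (fun k => hLmmem (φ₁ k))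
  rw [isClosed_Icc.closure_eq] at hLmem hcbarmem
  set Φ : ℕ → ℕ := φ₁ ∘ φ₂ with hΦdef
  have hΦ : StrictMono Φ := hφ₁.comp hφ₂
  have hAlim : Tendsto (fun k => A (Φ k)) atTop (nhds L) := hφ₁lim.comp hφ₂.tendsto_atTop
  have hLmlim : Tendsto (fun k => Lm (Φ k)) atTop (nhds cbar) := hφ₂lim
  have hskinf : Tendsto (fun k => s (Φ k)) atTop atTop := hsinf.comp hΦ.tendsto_atTop
  have hmean'' : Tendsto (fun k => (s (Φ k))⁻¹ • ∫ u in (0:ℝ)..s (Φ k), g u) atTop (nhds w) :=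
    hmean'.comp hΦ.tendsto_atTop
  have hmeannorm : Tendsto (fun k => ‖((s (Φ k))⁻¹ • ∫ u in (0:ℝ)..s (Φ k), g u) - w‖)
      atTop (nhds 0) := by
    have := tendsto_iff_dist_tendsto_zero.mp hmean''
    simpa [dist_eq_norm] using this
  have hskinv0 : Tendsto (fun k => (s (Φ k))⁻¹) atTop (nhds 0) :=
    tendsto_inv_atTop_zero.comp hskinf
  -- deviation of a point from the mean of any nonexpansive-flow average
  -- F is bounded by L pointwise
  have hFL : ∀ u : ℝ, 0 ≤ u → F u ≤ L := by
    intro u hu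
    have hev : ∀ᶠ k in atTop, F u ≤ (s (Φ k))⁻¹ * (u * (2*M)) + A (Φ k) +
        ‖((s (Φ k))⁻¹ • ∫ v in (0:ℝ)..s (Φ k), g v) - w‖ := by
      filter_upwards [hskinf.eventually_ge_atTop u] with k hk
      set sk : ℝ := s (Φ k) with hsk
      have hsk0 : 0 < sk := hs0 _
      have hint1 : IntervalIntegrable (fun v => ‖g u - g v‖) volume 0 sk := by
        apply ContinuousOn.intervalIntegrable
        apply ContinuousOn.norm
        apply ContinuousOn.sub continuousOn_const
        apply hgcont.mono
        intro v hv
        rw [Set.uIcc_of_le hsk0.le] at hv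
        exact hv.1
      have e0 : (∫ _v in (0:ℝ)..sk, g u) = sk • g u := by
        rw [intervalIntegral.integral_const, sub_zero]
      have e1 : g u - ((sk)⁻¹ • ∫ v in (0:ℝ)..sk, g v)
          = (sk)⁻¹ • ∫ v in (0:ℝ)..sk, (g u - g v) := by
        rw [intervalIntegral.integral_sub intervalIntegrable_const (hgint 0 sk le_rfl hsk0.le),
          e0, smul_sub, inv_smul_smul₀ hsk0.ne']
      have e2 : ‖g u - ((sk)⁻¹ • ∫ v in (0:ℝ)..sk, g v)‖
          ≤ (sk)⁻¹ * ∫ v in (0:ℝ)..sk, ‖g u - g v‖ := by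
        rw [e1, norm_smul, Real.norm_eq_abs, abs_of_nonneg (by positivity)]
        apply mul_le_mul_of_nonneg_left _ (by positivity)
        exact intervalIntegral.norm_integral_le_integral_norm hsk0.le
      have e3 : (∫ v in (0:ℝ)..sk, ‖g u - g v‖)
          = (∫ v in (0:ℝ)..u, ‖g u - g v‖) + ∫ v in u..sk, ‖g u - g v‖ := by
        rw [integral_add_adjacent_intervals (hint1.mono_set ?_) (hint1.mono_set ?_)]
        · rw [Set.uIcc_of_le hu, Set.uIcc_of_le hsk0.le]
          exact Set.Icc_subset_Icc le_rfl hk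
        · rw [Set.uIcc_of_le hk, Set.uIcc_of_le hsk0.le]
          exact Set.Icc_subset_Icc hu le_rfl
      have e4 : (∫ v in (0:ℝ)..u, ‖g u - g v‖) ≤ u * (2*M) := by
        have h1 : (∫ v in (0:ℝ)..u, ‖g u - g v‖) ≤ ∫ _v in (0:ℝ)..u, 2*M := by
          apply integral_mono_on hu (hint1.mono_set ?_) intervalIntegrable_const
          · intro v hv
            exact hCdist _ (hgC u hu) _ (hgC v hv.1)
          · rw [Set.uIcc_of_le hu, Set.uIcc_of_le hsk0.le]
            exact Set.Icc_subset_Icc le_rfl hk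
        rw [intervalIntegral.integral_const, smul_eq_mul, sub_zero] at h1
        exact h1
      have e5 : (∫ v in u..sk, ‖g u - g v‖) ≤ ∫ v in (0:ℝ)..sk, F v := by
        have h1 : (∫ v in u..sk, ‖g u - g v‖) ≤ ∫ v in u..sk, F (v - u) := by
          apply integral_mono_on hk (hint1.mono_set ?_) ?_
          · intro v hv
            rw [norm_sub_rev]
            exact hFkey u v hu hv.1
          · rw [Set.uIcc_of_le hk, Set.uIcc_of_le hsk0.le]
            exact Set.Icc_subset_Icc hu le_rfl
          · have : ContinuousOn (fun v => F (v - u)) (Set.uIcc u sk) := by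
              apply hFcont.comp (continuousOn_id.sub continuousOn_const)
              intro v hv
              rw [Set.uIcc_of_le hk] at hv
              have h9 := hv.1
              show (0:ℝ) ≤ id v - u
              simp only [id_eq]
              linarith
            exact this.intervalIntegrable
        have h2 : (∫ v in u..sk, F (v - u)) = ∫ v in (0:ℝ)..(sk - u), F v := by
          rw [intervalIntegral.integral_comp_sub_right F u, sub_self]
        have h3 : (∫ v in (0:ℝ)..(sk - u), F v) ≤ ∫ v in (0:ℝ)..sk, F v := by
          apply intervalIntegral.integral_mono_interval le_rfl (by linarith) (by linarith)
          · exact Filter.Eventually.of_forall (fun v => hF0 v)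
          · exact hFint 0 sk le_rfl hsk0.le
        linarith
      have efinal : ‖g u - ((sk)⁻¹ • ∫ v in (0:ℝ)..sk, g v)‖
          ≤ (sk)⁻¹ * (u * (2*M)) + A (Φ k) := by
        have h6 : (sk)⁻¹ * ∫ v in (0:ℝ)..sk, ‖g u - g v‖
            ≤ (sk)⁻¹ * (u * (2*M) + ∫ v in (0:ℝ)..sk, F v) := by
          apply mul_le_mul_of_nonneg_left _ (by positivity)
          rw [e3]; linarith
        rw [mul_add] at h6
        exact e2.trans (h6.trans (by rw [hA]))
      calc F u = ‖g u - w‖ := rfl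
        _ ≤ ‖g u - ((sk)⁻¹ • ∫ v in (0:ℝ)..sk, g v)‖ +
            ‖((sk)⁻¹ • ∫ v in (0:ℝ)..sk, g v) - w‖ := norm_sub_le_norm_sub_add_norm_sub _ _ _
        _ ≤ (sk)⁻¹ * (u * (2*M)) + A (Φ k) +
            ‖((sk)⁻¹ • ∫ v in (0:ℝ)..sk, g v) - w‖ := by linarith [efinal]
    have hlim : Tendsto (fun k => (s (Φ k))⁻¹ * (u * (2*M)) + A (Φ k) +
        ‖((s (Φ k))⁻¹ • ∫ v in (0:ℝ)..s (Φ k), g v) - w‖) atTop (nhds L) := by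
      have t1 : Tendsto (fun k => (s (Φ k))⁻¹ * (u * (2*M))) atTop (nhds 0) := by
        simpa using hskinv0.mul_const (u * (2*M))
      have := (t1.add hAlim).add hmeannorm
      simpa using this
    exact ge_of_tendsto hlim hev
  have hlamL : ∀ v : ℝ, 0 ≤ v → lam v ≤ L := fun v hv => (hlamF v hv).trans (hFL v hv)
  -- integrability of the shifted orbit
  have hgshiftint : ∀ j, ∀ b : ℝ, 0 ≤ b →
      IntervalIntegrable (fun u => g (t j + u)) volume 0 b := by
    intro j b hb
    apply ContinuousOn.intervalIntegrable
    apply hgcont.comp (continuousOn_const.add continuousOn_id)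
    intro u hu
    rw [Set.uIcc_of_le hb] at hu
    have h8 := ht0 j
    have h9 := hu.1
    show (0:ℝ) ≤ t j + id u
    simp only [id_eq]
    linarith
  -- the averages of h also converge to w
  have hmeanh : Tendsto (fun k => ‖((s (Φ k))⁻¹ • ∫ u in (0:ℝ)..s (Φ k), h u) - w‖)
      atTop (nhds 0) := by
    rw [Metric.tendsto_atTop]
    intro ε hε
    obtain ⟨j, hj⟩ : ∃ j, δ j < ε/3 :=
      (hδlim.eventually_lt_const (show (0:ℝ) < ε/3 by positivity)).exists
    have hev1 : ∀ᶠ k in atTop, t j ≤ s (Φ k) := hskinf.eventually_ge_atTop (t j)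
    have hev2 : ∀ᶠ k in atTop, (s (Φ k))⁻¹ * (2 * M * t j) < ε/3 := by
      have hl : Tendsto (fun k => (s (Φ k))⁻¹ * (2*M*t j)) atTop (nhds 0) := by
        simpa using hskinv0.mul_const (2*M*t j)
      exact hl.eventually_lt_const (by positivity)
    have hev3 : ∀ᶠ k in atTop,
        ‖((s (Φ k))⁻¹ • ∫ u in (0:ℝ)..s (Φ k), g u) - w‖ < ε/3 :=
      hmeannorm.eventually_lt_const (by positivity)
    have hcomb := (hev1.and (hev2.and hev3))
    rw [eventually_atTop] at hcomb
    obtain ⟨N, hN⟩ := hcomb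
    refine ⟨N, ?_⟩
    intro k hk
    obtain ⟨h1, h2, h3⟩ := hN k hk
    set sk : ℝ := s (Φ k) with hskdef
    have hsk0 : 0 < sk := hs0 _
    -- estimate 1 : average of h vs average of shifted g
    have est1 : ‖((sk)⁻¹ • ∫ u in (0:ℝ)..sk, h u) -
        ((sk)⁻¹ • ∫ u in (0:ℝ)..sk, g (t j + u))‖ ≤ δ j := by
      rw [← smul_sub, ← intervalIntegral.integral_sub (hhint 0 sk le_rfl hsk0.le)
        (hgshiftint j sk hsk0.le)]
      rw [norm_smul, Real.norm_eq_abs, abs_of_nonneg (by positivity)]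
      have hb : ‖∫ u in (0:ℝ)..sk, (h u - g (t j + u))‖ ≤ δ j * |sk - 0| := by
        apply intervalIntegral.norm_integral_le_of_norm_le_const
        intro u hu
        rw [Set.uIoc_of_le hsk0.le] at hu
        rw [norm_sub_rev]
        exact htrack j u hu.1.le
      rw [abs_of_nonneg (by linarith)] at hb
      calc (sk)⁻¹ * ‖∫ u in (0:ℝ)..sk, (h u - g (t j + u))‖
          ≤ (sk)⁻¹ * (δ j * (sk - 0)) := by
            apply mul_le_mul_of_nonneg_left hb (by positivity)
        _ = δ j := by field_simp; ring
    -- estimate 2 : average of shifted g vs average of g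
    have est2 : ‖((sk)⁻¹ • ∫ u in (0:ℝ)..sk, g (t j + u)) -
        ((sk)⁻¹ • ∫ u in (0:ℝ)..sk, g u)‖ ≤ (sk)⁻¹ * (2 * M * t j) := by
      have ecomp : (∫ u in (0:ℝ)..sk, g (t j + u)) = ∫ u in (t j)..(t j + sk), g u := by
        rw [intervalIntegral.integral_comp_add_left g (t j), add_zero]
      have e1 := integral_add_adjacent_intervals (hgint 0 (t j) le_rfl (ht0 j))
        (hgint (t j) (t j + sk) (ht0 j) (by positivity))
      have e2 := integral_add_adjacent_intervals (hgint 0 sk le_rfl hsk0.le)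
        (hgint sk (t j + sk) hsk0.le (by positivity))
      have ediff : (∫ u in (t j)..(t j + sk), g u) - (∫ u in (0:ℝ)..sk, g u)
          = (∫ u in sk..(t j + sk), g u) - (∫ u in (0:ℝ)..(t j), g u) := by
        rw [sub_eq_sub_iff_add_eq_add]
        calc (∫ u in (t j)..(t j + sk), g u) + (∫ u in (0:ℝ)..(t j), g u)
            = (∫ u in (0:ℝ)..(t j), g u) + (∫ u in (t j)..(t j + sk), g u) := by abel
          _ = ∫ u in (0:ℝ)..(t j + sk), g u := e1
          _ = (∫ u in (0:ℝ)..sk, g u) + (∫ u in sk..(t j + sk), g u) := e2.symm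
          _ = (∫ u in sk..(t j + sk), g u) + (∫ u in (0:ℝ)..sk, g u) := by abel
      have eb1 : ‖∫ u in sk..(t j + sk), g u‖ ≤ M * t j := by
        have hb := intervalIntegral.norm_integral_le_of_norm_le_const (C := M)
          (f := g) (a := sk) (b := t j + sk) ?_
        · rw [show t j + sk - sk = t j by ring, abs_of_nonneg (ht0 j)] at hb
          exact hb
        · intro u hu
          rw [Set.uIoc_of_le (by linarith [ht0 j])] at hu
          exact hM (g u) (hgC u (by linarith [hu.1]))
      have eb2 : ‖∫ u in (0:ℝ)..(t j), g u‖ ≤ M * t j := by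
        have hb := intervalIntegral.norm_integral_le_of_norm_le_const (C := M)
          (f := g) (a := 0) (b := t j) ?_
        · rw [sub_zero, abs_of_nonneg (ht0 j)] at hb
          exact hb
        · intro u hu
          rw [Set.uIoc_of_le (ht0 j)] at hu
          exact hM (g u) (hgC u hu.1.le)
      rw [← smul_sub, ecomp, ediff, norm_smul, Real.norm_eq_abs,
        abs_of_nonneg (by positivity : (0:ℝ) ≤ (sk)⁻¹)]
      have : ‖(∫ u in sk..(t j + sk), g u) - (∫ u in (0:ℝ)..(t j), g u)‖ ≤ 2 * M * t j := by
        calc ‖(∫ u in sk..(t j + sk), g u) - (∫ u in (0:ℝ)..(t j), g u)‖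
            ≤ ‖∫ u in sk..(t j + sk), g u‖ + ‖∫ u in (0:ℝ)..(t j), g u‖ := norm_sub_le _ _
          _ ≤ 2 * M * t j := by linarith
      apply mul_le_mul_of_nonneg_left this (by positivity)
    have htotal : ‖((sk)⁻¹ • ∫ u in (0:ℝ)..sk, h u) - w‖ < ε := by
      have tri1 := norm_sub_le_norm_sub_add_norm_sub
        ((sk)⁻¹ • ∫ u in (0:ℝ)..sk, h u)
        ((sk)⁻¹ • ∫ u in (0:ℝ)..sk, g (t j + u)) w
      have tri2 := norm_sub_le_norm_sub_add_norm_sub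
        ((sk)⁻¹ • ∫ u in (0:ℝ)..sk, g (t j + u))
        ((sk)⁻¹ • ∫ u in (0:ℝ)..sk, g u) w
      calc ‖((sk)⁻¹ • ∫ u in (0:ℝ)..sk, h u) - w‖
          ≤ ‖((sk)⁻¹ • ∫ u in (0:ℝ)..sk, h u) -
              ((sk)⁻¹ • ∫ u in (0:ℝ)..sk, g (t j + u))‖ +
            (‖((sk)⁻¹ • ∫ u in (0:ℝ)..sk, g (t j + u)) -
              ((sk)⁻¹ • ∫ u in (0:ℝ)..sk, g u)‖ +
             ‖((sk)⁻¹ • ∫ u in (0:ℝ)..sk, g u) - w‖) := by linarith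
        _ < ε/3 + (ε/3 + ε/3) := by
            apply add_lt_add_of_le_of_lt (est1.trans hj.le)
            apply add_lt_add_of_le_of_lt (est2.trans h2.le) h3
        _ = ε := by ring
    rw [Real.dist_eq, sub_zero, abs_of_nonneg (norm_nonneg _)]
    exact htotal
  -- every point of the asymptotic orbit is within cbar of w
  have hacb : ∀ v : ℝ, 0 ≤ v → ‖h v - w‖ ≤ cbar := by
    intro v hv
    have hev : ∀ᶠ k in atTop, ‖h v - w‖ ≤ (s (Φ k))⁻¹ * (v * (2*M)) + Lm (Φ k) +
        ‖((s (Φ k))⁻¹ • ∫ u in (0:ℝ)..s (Φ k), h u) - w‖ := by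
      filter_upwards [hskinf.eventually_ge_atTop v] with k hk
      set sk : ℝ := s (Φ k) with hskdef
      have hsk0 : 0 < sk := hs0 _
      have hint1 : IntervalIntegrable (fun u => ‖h v - h u‖) volume 0 sk := by
        apply ContinuousOn.intervalIntegrable
        apply ContinuousOn.norm
        apply ContinuousOn.sub continuousOn_const
        apply hhcont.mono
        intro u hu
        rw [Set.uIcc_of_le hsk0.le] at hu
        exact hu.1
      have e0 : (∫ _u in (0:ℝ)..sk, h v) = sk • h v := by
        rw [intervalIntegral.integral_const, sub_zero]
      have e1 : h v - ((sk)⁻¹ • ∫ u in (0:ℝ)..sk, h u)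
          = (sk)⁻¹ • ∫ u in (0:ℝ)..sk, (h v - h u) := by
        rw [intervalIntegral.integral_sub intervalIntegrable_const
          (hhint 0 sk le_rfl hsk0.le), e0, smul_sub, inv_smul_smul₀ hsk0.ne']
      have e2 : ‖h v - ((sk)⁻¹ • ∫ u in (0:ℝ)..sk, h u)‖
          ≤ (sk)⁻¹ * ∫ u in (0:ℝ)..sk, ‖h v - h u‖ := by
        rw [e1, norm_smul, Real.norm_eq_abs, abs_of_nonneg (by positivity)]
        apply mul_le_mul_of_nonneg_left _ (by positivity)
        exact intervalIntegral.norm_integral_le_integral_norm hsk0.le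
      have e3 : (∫ u in (0:ℝ)..sk, ‖h v - h u‖)
          = (∫ u in (0:ℝ)..v, ‖h v - h u‖) + ∫ u in v..sk, ‖h v - h u‖ := by
        rw [integral_add_adjacent_intervals (hint1.mono_set ?_) (hint1.mono_set ?_)]
        · rw [Set.uIcc_of_le hv, Set.uIcc_of_le hsk0.le]
          exact Set.Icc_subset_Icc le_rfl hk
        · rw [Set.uIcc_of_le hk, Set.uIcc_of_le hsk0.le]
          exact Set.Icc_subset_Icc hv le_rfl
      have e4 : (∫ u in (0:ℝ)..v, ‖h v - h u‖) ≤ v * (2*M) := by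
        have h1 : (∫ u in (0:ℝ)..v, ‖h v - h u‖) ≤ ∫ _u in (0:ℝ)..v, 2*M := by
          apply integral_mono_on hv (hint1.mono_set ?_) intervalIntegrable_const
          · intro u hu
            exact hCdist _ (hhC v hv) _ (hhC u hu.1)
          · rw [Set.uIcc_of_le hv, Set.uIcc_of_le hsk0.le]
            exact Set.Icc_subset_Icc le_rfl hk
        rw [intervalIntegral.integral_const, smul_eq_mul, sub_zero] at h1
        exact h1
      have e5 : (∫ u in v..sk, ‖h v - h u‖) ≤ ∫ u in (0:ℝ)..sk, lam u := by
        have h1 : (∫ u in v..sk, ‖h v - h u‖) ≤ ∫ u in v..sk, lam (u - v) := by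
          apply integral_mono_on hk (hint1.mono_set ?_) ?_
          · intro u hu
            have := hscrew v (u - v) hv (by linarith [hu.1])
            rw [show v + (u - v) = u by ring] at this
            rw [this]
          · rw [Set.uIcc_of_le hk, Set.uIcc_of_le hsk0.le]
            exact Set.Icc_subset_Icc hv le_rfl
          · have : ContinuousOn (fun u => lam (u - v)) (Set.uIcc v sk) := by
              apply hlamcont.comp (continuousOn_id.sub continuousOn_const)
              intro u hu
              rw [Set.uIcc_of_le hk] at hu
              have h9 := hu.1
              show (0:ℝ) ≤ id u - v
              simp only [id_eq]
              linarith
            exact this.intervalIntegrable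
        have h2 : (∫ u in v..sk, lam (u - v)) = ∫ u in (0:ℝ)..(sk - v), lam u := by
          rw [intervalIntegral.integral_comp_sub_right lam v, sub_self]
        have h3 : (∫ u in (0:ℝ)..(sk - v), lam u) ≤ ∫ u in (0:ℝ)..sk, lam u := by
          apply intervalIntegral.integral_mono_interval le_rfl (by linarith) (by linarith)
          · exact Filter.Eventually.of_forall (fun u => hlamnn u)
          · exact hlamint 0 sk le_rfl hsk0.le
        linarith
      have efinal : ‖h v - ((sk)⁻¹ • ∫ u in (0:ℝ)..sk, h u)‖
          ≤ (sk)⁻¹ * (v * (2*M)) + Lm (Φ k) := by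
        have h6 : (sk)⁻¹ * ∫ u in (0:ℝ)..sk, ‖h v - h u‖
            ≤ (sk)⁻¹ * (v * (2*M) + ∫ u in (0:ℝ)..sk, lam u) := by
          apply mul_le_mul_of_nonneg_left _ (by positivity)
          rw [e3]; linarith
        rw [mul_add] at h6
        exact e2.trans (h6.trans (by rw [hLm]))
      calc ‖h v - w‖ ≤ ‖h v - ((sk)⁻¹ • ∫ u in (0:ℝ)..sk, h u)‖ +
            ‖((sk)⁻¹ • ∫ u in (0:ℝ)..sk, h u) - w‖ := norm_sub_le_norm_sub_add_norm_sub _ _ _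
        _ ≤ (sk)⁻¹ * (v * (2*M)) + Lm (Φ k) +
            ‖((sk)⁻¹ • ∫ u in (0:ℝ)..sk, h u) - w‖ := by linarith [efinal]
    have hlim : Tendsto (fun k => (s (Φ k))⁻¹ * (v * (2*M)) + Lm (Φ k) +
        ‖((s (Φ k))⁻¹ • ∫ u in (0:ℝ)..s (Φ k), h u) - w‖) atTop (nhds cbar) := by
      have t1 : Tendsto (fun k => (s (Φ k))⁻¹ * (v * (2*M))) atTop (nhds 0) := by
        simpa using hskinv0.mul_const (v * (2*M))
      have := (t1.add hLmlim).add hmeanh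
      simpa using this
    exact ge_of_tendsto hlim hev
  -- L ≤ cbar
  have hLcb : L ≤ cbar := by
    have key : ∀ j, ∀ u : ℝ, t j ≤ u → F u ≤ cbar + δ j := by
      intro j u hu
      have hu0 : 0 ≤ u := le_trans (ht0 j) hu
      have h1 : ‖g u - h (u - t j)‖ ≤ δ j := by
        have := htrack j (u - t j) (by linarith)
        rw [show t j + (u - t j) = u by ring] at this
        exact this
      have h2 : ‖h (u - t j) - w‖ ≤ cbar := hacb (u - t j) (by linarith)
      calc F u = ‖g u - w‖ := rfl
        _ ≤ ‖g u - h (u - t j)‖ + ‖h (u - t j) - w‖ := norm_sub_le_norm_sub_add_norm_sub _ _ _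
        _ ≤ cbar + δ j := by linarith
    have hcbar0 : 0 ≤ cbar := hcbarmem.1
    have step : ∀ j, L ≤ cbar + δ j := by
      intro j
      have hev : ∀ᶠ k in atTop, A (Φ k) ≤ (s (Φ k))⁻¹ * (t j * (2*M)) + (cbar + δ j) := by
        filter_upwards [hskinf.eventually_ge_atTop (t j)] with k hk
        set sk : ℝ := s (Φ k) with hskdef
        have hsk0 : 0 < sk := hs0 _
        have e1 : (∫ u in (0:ℝ)..sk, F u)
            = (∫ u in (0:ℝ)..(t j), F u) + ∫ u in (t j)..sk, F u :=
          (integral_add_adjacent_intervals (hFint 0 (t j) le_rfl (ht0 j))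
            (hFint (t j) sk (ht0 j) hsk0.le)).symm
        have e2 : (∫ u in (0:ℝ)..(t j), F u) ≤ t j * (2*M) := by
          have h1 : (∫ u in (0:ℝ)..(t j), F u) ≤ ∫ _u in (0:ℝ)..(t j), 2*M := by
            apply integral_mono_on (ht0 j) (hFint 0 (t j) le_rfl (ht0 j))
              intervalIntegrable_const
            intro u hu; exact hF2M u hu.1
          rw [intervalIntegral.integral_const, smul_eq_mul, sub_zero] at h1
          exact h1
        have e3 : (∫ u in (t j)..sk, F u) ≤ (sk - t j) * (cbar + δ j) := by
          have h1 : (∫ u in (t j)..sk, F u) ≤ ∫ _u in (t j)..sk, (cbar + δ j) := by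
            apply integral_mono_on hk (hFint (t j) sk (ht0 j) hsk0.le)
              intervalIntegrable_const
            intro u hu; exact key j u hu.1
          rw [intervalIntegral.integral_const, smul_eq_mul] at h1
          exact h1
        have e4 : (sk - t j) * (cbar + δ j) ≤ sk * (cbar + δ j) := by
          apply mul_le_mul_of_nonneg_right _ (by positivity)
          linarith [ht0 j]
        have : A (Φ k) = (sk)⁻¹ * ∫ u in (0:ℝ)..sk, F u := rfl
        rw [this, e1]
        calc (sk)⁻¹ * ((∫ u in (0:ℝ)..(t j), F u) + ∫ u in (t j)..sk, F u)
            ≤ (sk)⁻¹ * (t j * (2*M) + sk * (cbar + δ j)) := by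
              apply mul_le_mul_of_nonneg_left _ (by positivity)
              linarith
          _ = (sk)⁻¹ * (t j * (2*M)) + (sk)⁻¹ * (sk * (cbar + δ j)) := by ring
          _ = (sk)⁻¹ * (t j * (2*M)) + (cbar + δ j) := by
              rw [inv_mul_cancel_left₀ hsk0.ne']
      have hlim : Tendsto (fun k => (s (Φ k))⁻¹ * (t j * (2*M)) + (cbar + δ j)) atTop
          (nhds (cbar + δ j)) := by
        have t1 : Tendsto (fun k => (s (Φ k))⁻¹ * (t j * (2*M))) atTop (nhds 0) := by
          simpa using hskinv0.mul_const (t j * (2*M))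
        simpa using t1.add (tendsto_const_nhds (x := cbar + δ j))
      exact le_of_tendsto_of_tendsto hAlim hlim hev
    have hlim2 : Tendsto (fun j => cbar + δ j) atTop (nhds cbar) := by
      simpa using (tendsto_const_nhds (x := cbar)).add hδlim
    exact ge_of_tendsto hlim2 (Eventually.of_forall step)
  -- cbar ≤ L
  have hcbL : cbar ≤ L := by
    apply le_of_tendsto_of_tendsto hLmlim hAlim
    apply Eventually.of_forall
    intro k
    have hsk0 : 0 < s (Φ k) := hs0 _
    show (s (Φ k))⁻¹ * (∫ u in (0:ℝ)..s (Φ k), lam u)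
        ≤ (s (Φ k))⁻¹ * ∫ u in (0:ℝ)..s (Φ k), F u
    apply mul_le_mul_of_nonneg_left _ (by positivity)
    apply integral_mono_on hsk0.le (hlamint 0 _ le_rfl hsk0.le) (hFint 0 _ le_rfl hsk0.le)
    intro u hu
    exact hlamF u hu.1
  -- the crucial smallness of L
  have hL2ε : ∀ ε : ℝ, 0 < ε → L ≤ 2*ε := by
    intro ε hε
    by_contra hcon
    push_neg at hcon
    obtain ⟨ℓ, hℓ, hrelℓ⟩ := hrel ε hε
    obtain ⟨η, hη, hηlam⟩ := hlamcont0 ε hε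
    set W : ℝ := ℓ + η with hWdef
    have hW : 0 < W := by positivity
    have hLnn : 0 ≤ L := hLmem.1
    have hwin : ∀ i : ℕ, (∫ u in ((i:ℝ)*W)..(((i:ℝ)+1)*W), lam u)
        ≤ W * L - η * (L - 2*ε) := by
      intro i
      set Aa : ℝ := (i:ℝ)*W with hAadef
      have hAa0 : 0 ≤ Aa := by positivity
      obtain ⟨τ, hτ1, hτ2, hτ3⟩ := hrelℓ Aa hAa0
      have hτ0 : 0 ≤ τ := le_trans hAa0 hτ1
      have hτη : τ + η ≤ Aa + W := by rw [hWdef]; linarith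
      have hiW : ((i:ℝ)+1)*W = Aa + W := by rw [hAadef]; ring
      have hsplit : (∫ u in Aa..(Aa+W), lam u)
          = (∫ u in Aa..τ, lam u) + (∫ u in τ..(τ+η), lam u)
            + ∫ u in (τ+η)..(Aa+W), lam u := by
        have s1 := integral_add_adjacent_intervals (hlamint Aa τ hAa0 hτ0)
          (hlamint τ (Aa+W) hτ0 (by linarith))
        have s2 := integral_add_adjacent_intervals (hlamint τ (τ+η) hτ0 (by linarith))
          (hlamint (τ+η) (Aa+W) (by linarith) (by linarith))
        rw [← s1, ← s2]
        ring
      have b1 : (∫ u in Aa..τ, lam u) ≤ (τ - Aa) * L := by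
        have h1 : (∫ u in Aa..τ, lam u) ≤ ∫ _u in Aa..τ, L := by
          apply integral_mono_on hτ1 (hlamint Aa τ hAa0 hτ0) intervalIntegrable_const
          intro u hu; exact hlamL u (le_trans hAa0 hu.1)
        rw [intervalIntegral.integral_const, smul_eq_mul] at h1
        exact h1
      have b2 : (∫ u in τ..(τ+η), lam u) ≤ η * (2*ε) := by
        have h1 : (∫ u in τ..(τ+η), lam u) ≤ ∫ _u in τ..(τ+η), 2*ε := by
          apply integral_mono_on (by linarith) (hlamint τ (τ+η) hτ0 (by linarith))
            intervalIntegrable_const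
          intro u hu
          have e1 : lam u = lam (τ + (u - τ)) := by rw [show τ + (u - τ) = u by ring]
          have e2 : lam (τ + (u - τ)) ≤ lam τ + lam (u - τ) :=
            hlamsub τ (u - τ) hτ0 (by linarith [hu.1])
          have e3 : lam (u - τ) ≤ ε := hηlam (u - τ) (by linarith [hu.1]) (by linarith [hu.2])
          rw [e1]
          linarith
        rw [intervalIntegral.integral_const, smul_eq_mul,
          show τ + η - τ = η by ring] at h1
        exact h1
      have b3 : (∫ u in (τ+η)..(Aa+W), lam u) ≤ (Aa + W - (τ+η)) * L := by
        have h1 : (∫ u in (τ+η)..(Aa+W), lam u) ≤ ∫ _u in (τ+η)..(Aa+W), L := by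
          apply integral_mono_on (by linarith) (hlamint (τ+η) (Aa+W) (by linarith) (by linarith))
            intervalIntegrable_const
          intro u hu; exact hlamL u (le_trans (by linarith) hu.1)
        rw [intervalIntegral.integral_const, smul_eq_mul] at h1
        exact h1
      have hτAa : τ - Aa ≤ ℓ := by linarith
      have hfin : (τ - Aa) * L + η * (2*ε) + (Aa + W - (τ+η)) * L ≤ W * L - η * (L - 2*ε) := by
        have e1 : (τ - Aa) * L + (Aa + W - (τ+η)) * L = (W - η) * L := by ring
        nlinarith
      rw [hiW, hsplit]
      linarith
    have hsum : ∀ n : ℕ, (∫ u in (0:ℝ)..((n:ℝ)*W), lam u)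
        ≤ n * (W*L - η*(L-2*ε)) := by
      intro n
      induction n with
      | zero => simp
      | succ n ih =>
        have e1 : (∫ u in (0:ℝ)..(((n:ℝ)+1)*W), lam u)
            = (∫ u in (0:ℝ)..((n:ℝ)*W), lam u)
              + ∫ u in ((n:ℝ)*W)..(((n:ℝ)+1)*W), lam u := by
          rw [integral_add_adjacent_intervals (hlamint 0 ((n:ℝ)*W) le_rfl (by positivity))
            (hlamint ((n:ℝ)*W) (((n:ℝ)+1)*W) (by positivity) (by positivity))]
        push_cast
        rw [e1]
        have := hwin n
        push_cast at ih
        linarith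
    -- conclude : Lm is eventually below L - (η/W)*(L-2ε) + small
    set β : ℝ := L - (η/W)*(L - 2*ε) with hβdef
    have hβval : 0 ≤ β := by
      have h1 : η/W ≤ 1 := by
        rw [div_le_one hW]; rw [hWdef]; linarith
      have h2 : (η/W)*(L-2*ε) ≤ 1*(L-2*ε) := by
        apply mul_le_mul_of_nonneg_right h1 (by linarith)
      rw [hβdef]; nlinarith
    have hstep : ∀ᶠ k in atTop, Lm (Φ k) ≤ β + (s (Φ k))⁻¹ * (W*L) := by
      filter_upwards [hskinf.eventually_ge_atTop W] with k hk
      set sk : ℝ := s (Φ k) with hskdef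
      have hsk0 : 0 < sk := hs0 _
      set n : ℕ := ⌊sk / W⌋₊ with hndef
      have hn1 : (n:ℝ)*W ≤ sk := by
        have := Nat.floor_le (show 0 ≤ sk / W by positivity)
        calc (n:ℝ)*W ≤ (sk/W)*W := mul_le_mul_of_nonneg_right this hW.le
          _ = sk := by field_simp
      have hn2 : sk < ((n:ℝ)+1)*W := by
        have := Nat.lt_floor_add_one (sk / W)
        calc sk = (sk/W)*W := by field_simp
          _ < ((n:ℝ)+1)*W := by
            apply mul_lt_mul_of_pos_right _ hW
            exact_mod_cast this
      have e1 : (∫ u in (0:ℝ)..sk, lam u)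
          = (∫ u in (0:ℝ)..((n:ℝ)*W), lam u) + ∫ u in ((n:ℝ)*W)..sk, lam u := by
        rw [integral_add_adjacent_intervals (hlamint 0 ((n:ℝ)*W) le_rfl (by positivity))
          (hlamint ((n:ℝ)*W) sk (by positivity) hsk0.le)]
      have e2 : (∫ u in ((n:ℝ)*W)..sk, lam u) ≤ (sk - (n:ℝ)*W) * L := by
        have h1 : (∫ u in ((n:ℝ)*W)..sk, lam u) ≤ ∫ _u in ((n:ℝ)*W)..sk, L := by
          apply integral_mono_on hn1 (hlamint ((n:ℝ)*W) sk (by positivity) hsk0.le)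
            intervalIntegrable_const
          intro u hu; exact hlamL u (le_trans (by positivity) hu.1)
        rw [intervalIntegral.integral_const, smul_eq_mul] at h1
        exact h1
      have e3 : (sk - (n:ℝ)*W) * L ≤ W * L := by
        apply mul_le_mul_of_nonneg_right _ hLnn
        linarith
      have e4 : (∫ u in (0:ℝ)..sk, lam u) ≤ (n:ℝ) * (W*L - η*(L-2*ε)) + W*L := by
        rw [e1]
        have := hsum n
        linarith
      have e5 : (n:ℝ) * (W*L - η*(L-2*ε)) = ((n:ℝ)*W) * β := by
        rw [hβdef]
        field_simp
      have e6 : Lm (Φ k) = (sk)⁻¹ * ∫ u in (0:ℝ)..sk, lam u := rfl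
      have e7 : (sk)⁻¹ * (((n:ℝ)*W) * β) ≤ β := by
        have h1 : (sk)⁻¹ * (((n:ℝ)*W) * β) ≤ (sk)⁻¹ * (sk * β) := by
          apply mul_le_mul_of_nonneg_left _ (by positivity)
          exact mul_le_mul_of_nonneg_right hn1 hβval
        rw [inv_mul_cancel_left₀ hsk0.ne'] at h1
        exact h1
      calc Lm (Φ k) = (sk)⁻¹ * ∫ u in (0:ℝ)..sk, lam u := e6
        _ ≤ (sk)⁻¹ * (((n:ℝ)*W) * β + W*L) := by
            apply mul_le_mul_of_nonneg_left _ (by positivity)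
            rw [← e5]; exact e4
        _ = (sk)⁻¹ * (((n:ℝ)*W) * β) + (sk)⁻¹ * (W*L) := by ring
        _ ≤ β + (sk)⁻¹ * (W*L) := by linarith [e7]
    have hlim : Tendsto (fun k => β + (s (Φ k))⁻¹ * (W*L)) atTop (nhds β) := by
      have t1 : Tendsto (fun k => (s (Φ k))⁻¹ * (W*L)) atTop (nhds 0) := by
        simpa using hskinv0.mul_const (W*L)
      simpa using (tendsto_const_nhds (x := β)).add t1
    have hfinal : cbar ≤ β := le_of_tendsto_of_tendsto hLmlim hlim hstep
    have hcbeq : cbar = L := le_antisymm hcbL hLcb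
    rw [hcbeq, hβdef] at hfinal
    have hpos : 0 < (η/W)*(L - 2*ε) := by
      apply mul_pos (by positivity)
      linarith
    linarith
  have hL0 : L ≤ 0 := by
    by_contra hcon
    push_neg at hcon
    have := hL2ε (L/4) (by linarith)
    linarith
  have hLeq : L = 0 := le_antisymm hL0 hLmem.1
  intro u hu
  have h1 := hFL u hu
  rw [hLeq] at h1
  have h2 : F u = 0 := le_antisymm h1 (hF0 u)
  have h3 : g u - w = 0 := by
    rw [← norm_eq_zero]
    exact h2
  have h4 : g u = w := by
    rw [sub_eq_zero] at h3
    exact h3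
  exact h4


set_option maxHeartbeats 1600000 in
/-- Let `C` be a nonempty compact convex subset of a Banach space `E` and
`{T(t) : t ≥ 0}` a one-parameter strongly continuous semigroup of nonexpansive
mappings on `C`.  For `t_n ∈ (0,∞)` with `t_n → ∞`, `t_{n+1}/t_n → 1`, and
`α_n ∈ [0,1]` with `0 < liminf α_n ≤ limsup α_n < 1`, the iteration
`x_{n+1} = (α_n/t_n) ∫_0^{t_n} T(s) x_n ds + (1 - α_n) x_n` starting from
`x_1 ∈ C` converges strongly to a common fixed point of `{T(t) : t ≥ 0}`. -/
theorem stmt16 {E : Type*} [NormedAddCommGroup E] [NormedSpace ℝ E] [CompleteSpace E]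
    (C : Set E) (hCne : C.Nonempty) (hCcpt : IsCompact C) (hCconv : Convex ℝ C)
    (T : ℝ → E → E)
    (hmaps : ∀ t : ℝ, 0 ≤ t → Set.MapsTo (T t) C C)
    (hne : ∀ t : ℝ, 0 ≤ t → ∀ x ∈ C, ∀ y ∈ C, ‖T t x - T t y‖ ≤ ‖x - y‖)
    (hsg : ∀ s t : ℝ, 0 ≤ s → 0 ≤ t → ∀ x ∈ C, T (s + t) x = T s (T t x))
    (hcont : ∀ x ∈ C, ContinuousOn (fun t : ℝ => T t x) (Set.Ici 0))
    (tn : ℕ → ℝ) (htn0 : ∀ n, 0 < tn n)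
    (htninf : Tendsto tn atTop atTop)
    (htnratio : Tendsto (fun n => tn (n + 1) / tn n) atTop (nhds 1))
    (α : ℕ → ℝ) (hα : ∀ n, α n ∈ Set.Icc (0 : ℝ) 1)
    (h₁ : 0 < liminf α atTop) (h₂ : limsup α atTop < 1)
    (x : ℕ → E) (hx1 : x 1 ∈ C)
    (hrec : ∀ n ≥ 1, x (n + 1) =
      (α n / tn n) • (∫ s in (0 : ℝ)..tn n, T s (x n)) + (1 - α n) • x n) :
    ∃ z ∈ C, (∀ t : ℝ, 0 ≤ t → T t z = z) ∧ Tendsto x atTop (nhds z) := by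
  classical
  obtain ⟨M, hM⟩ := hCcpt.isBounded.exists_norm_le
  have hCclosed : IsClosed C := hCcpt.isClosed
  obtain ⟨c₀, hc₀⟩ := hCne
  have hM0 : 0 ≤ M := le_trans (norm_nonneg c₀) (hM c₀ hc₀)
  -- integrability of orbits
  have horbint : ∀ v ∈ C, ∀ a b : ℝ, 0 ≤ a → 0 ≤ b →
      IntervalIntegrable (fun u => T u v) volume a b := by
    intro v hv a b ha hb
    apply ContinuousOn.intervalIntegrable
    apply (hcont v hv).mono
    intro u hu
    rcases le_total a b with hab | hab
    · rw [Set.uIcc_of_le hab] at hu; exact le_trans ha hu.1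
    · rw [Set.uIcc_of_ge hab] at hu; exact le_trans hb hu.1
  -- the mean map
  set mean : ℝ → E → E := fun τ v => τ⁻¹ • ∫ u in (0:ℝ)..τ, T u v with hmean_def
  -- mean stays in C
  have hmeanC : ∀ v ∈ C, ∀ τ : ℝ, 0 < τ → mean τ v ∈ C := by
    intro v hv τ hτ
    by_contra hm
    obtain ⟨f, u0, hfa, hu0⟩ := geometric_hahn_banach_closed_point hCconv hCclosed hm
    have hfint : (∫ u in (0:ℝ)..τ, f (T u v)) = f (∫ u in (0:ℝ)..τ, T u v) :=
      ContinuousLinearMap.intervalIntegral_comp_comm f (horbint v hv 0 τ le_rfl hτ.le)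
    have h1 : (∫ u in (0:ℝ)..τ, f (T u v)) ≤ ∫ _u in (0:ℝ)..τ, u0 := by
      apply integral_mono_on hτ.le ?_ intervalIntegrable_const
      · intro u hu
        exact (hfa (T u v) (hmaps u hu.1 hv)).le
      · have : ContinuousOn (fun u => f (T u v)) (Set.uIcc 0 τ) := by
          apply f.continuous.comp_continuousOn
          apply (hcont v hv).mono
          intro u hu
          rw [Set.uIcc_of_le hτ.le] at hu
          exact hu.1
        exact this.intervalIntegrable
    rw [intervalIntegral.integral_const, smul_eq_mul, sub_zero] at h1
    have h2 : f (mean τ v) = τ⁻¹ * ∫ u in (0:ℝ)..τ, f (T u v) := by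
      rw [hmean_def]
      simp only []
      rw [_root_.map_smul, smul_eq_mul, hfint]
    have h3 : f (mean τ v) ≤ u0 := by
      rw [h2]
      calc τ⁻¹ * ∫ u in (0:ℝ)..τ, f (T u v) ≤ τ⁻¹ * (τ * u0) := by
            apply mul_le_mul_of_nonneg_left h1 (by positivity)
        _ = u0 := by field_simp
    linarith
  -- mean is nonexpansive in the base point
  have hmeanlip : ∀ u ∈ C, ∀ v ∈ C, ∀ τ : ℝ, 0 < τ →
      ‖mean τ u - mean τ v‖ ≤ ‖u - v‖ := by
    intro u hu v hv τ hτ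
    have e1 : mean τ u - mean τ v = τ⁻¹ • ∫ s in (0:ℝ)..τ, (T s u - T s v) := by
      rw [hmean_def]
      simp only []
      rw [intervalIntegral.integral_sub (horbint u hu 0 τ le_rfl hτ.le)
        (horbint v hv 0 τ le_rfl hτ.le), smul_sub]
    rw [e1, norm_smul, Real.norm_eq_abs, abs_of_nonneg (by positivity)]
    have e2 : ‖∫ s in (0:ℝ)..τ, (T s u - T s v)‖ ≤ ‖u - v‖ * |τ - 0| := by
      apply intervalIntegral.norm_integral_le_of_norm_le_const
      intro s hs
      rw [Set.uIoc_of_le hτ.le] at hs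
      exact hne s hs.1.le u hu v hv
    rw [sub_zero, abs_of_nonneg hτ.le] at e2
    calc τ⁻¹ * ‖∫ s in (0:ℝ)..τ, (T s u - T s v)‖ ≤ τ⁻¹ * (‖u - v‖ * τ) := by
          apply mul_le_mul_of_nonneg_left e2 (by positivity)
      _ = ‖u - v‖ := by field_simp
  -- mean varies slowly in τ
  have hmeanscale : ∀ v ∈ C, ∀ τ τ' : ℝ, 0 < τ → τ ≤ τ' →
      ‖mean τ' v - mean τ v‖ ≤ 2*M*(1 - τ/τ') := by
    intro v hv τ τ' hτ hττ'
    have hτ' : 0 < τ' := lt_of_lt_of_le hτ hττ'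
    have hIτ : ‖∫ u in (0:ℝ)..τ, T u v‖ ≤ M * τ := by
      have hb := intervalIntegral.norm_integral_le_of_norm_le_const (C := M)
        (f := fun u => T u v) (a := 0) (b := τ) ?_
      · rw [sub_zero, abs_of_nonneg hτ.le] at hb; exact hb
      · intro u hu
        rw [Set.uIoc_of_le hτ.le] at hu
        exact hM _ (hmaps u hu.1.le hv)
    have hIττ' : ‖∫ u in τ..τ', T u v‖ ≤ M * (τ' - τ) := by
      have hb := intervalIntegral.norm_integral_le_of_norm_le_const (C := M)
        (f := fun u => T u v) (a := τ) (b := τ') ?_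
      · rw [abs_of_nonneg (by linarith)] at hb; exact hb
      · intro u hu
        rw [Set.uIoc_of_le hττ'] at hu
        exact hM _ (hmaps u (by linarith [hu.1]) hv)
    have esplit : (∫ u in (0:ℝ)..τ', T u v)
        = (∫ u in (0:ℝ)..τ, T u v) + ∫ u in τ..τ', T u v :=
      (integral_add_adjacent_intervals (horbint v hv 0 τ le_rfl hτ.le)
        (horbint v hv τ τ' hτ.le hτ'.le)).symm
    have e1 : mean τ' v - mean τ v
        = (τ'⁻¹ - τ⁻¹) • (∫ u in (0:ℝ)..τ, T u v) + τ'⁻¹ • ∫ u in τ..τ', T u v := by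
      rw [hmean_def]
      simp only []
      rw [esplit, smul_add, sub_smul]
      abel
    rw [e1]
    have e2 : ‖(τ'⁻¹ - τ⁻¹) • (∫ u in (0:ℝ)..τ, T u v)‖ ≤ (τ⁻¹ - τ'⁻¹) * (M * τ) := by
      rw [norm_smul, Real.norm_eq_abs, abs_of_nonpos (by
        have := one_div_le_one_div_of_le hτ hττ'
        simp only [one_div] at this
        linarith)]
      rw [show -(τ'⁻¹ - τ⁻¹) = τ⁻¹ - τ'⁻¹ by ring]
      apply mul_le_mul_of_nonneg_left hIτ
      have := one_div_le_one_div_of_le hτ hττ'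
      simp only [one_div] at this
      linarith
    have e3 : ‖τ'⁻¹ • ∫ u in τ..τ', T u v‖ ≤ τ'⁻¹ * (M * (τ' - τ)) := by
      rw [norm_smul, Real.norm_eq_abs, abs_of_nonneg (by positivity)]
      apply mul_le_mul_of_nonneg_left hIττ' (by positivity)
    have e4 : (τ⁻¹ - τ'⁻¹) * (M * τ) + τ'⁻¹ * (M * (τ' - τ)) = 2*M*(1 - τ/τ') := by
      field_simp
      ring
    calc ‖(τ'⁻¹ - τ⁻¹) • (∫ u in (0:ℝ)..τ, T u v) + τ'⁻¹ • ∫ u in τ..τ', T u v‖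
        ≤ ‖(τ'⁻¹ - τ⁻¹) • (∫ u in (0:ℝ)..τ, T u v)‖ + ‖τ'⁻¹ • ∫ u in τ..τ', T u v‖ :=
          norm_add_le _ _
      _ ≤ (τ⁻¹ - τ'⁻¹) * (M * τ) + τ'⁻¹ * (M * (τ' - τ)) := by linarith
      _ = 2*M*(1 - τ/τ') := e4
  -- iteration points
  set y : ℕ → E := fun n => mean (tn n) (x n) with hy
  have hrec' : ∀ n, 1 ≤ n → x (n+1) = α n • y n + (1 - α n) • x n := by
    intro n hn
    have e : α n • y n = (α n / tn n) • ∫ u in (0:ℝ)..tn n, T u (x n) := by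
      rw [hy]
      simp only []
      rw [hmean_def]
      simp only []
      rw [smul_smul, div_eq_mul_inv]
    rw [hrec n hn, e]
  have hxC : ∀ n, 1 ≤ n → x n ∈ C := by
    intro n hn
    induction n with
    | zero => omega
    | succ n ih =>
      rcases Nat.lt_or_ge 1 (n+1) with h | h
      · have hn1 : 1 ≤ n := by omega
        have hxn := ih hn1
        rw [hrec' n hn1]
        have hynC : y n ∈ C := hmeanC (x n) hxn (tn n) (htn0 n)
        exact hCconv hynC hxn (hα n).1 (by linarith [(hα n).2]) (by ring)
      · have : n = 0 := by omega
        subst this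
        exact hx1
  have hyCmem : ∀ n, 1 ≤ n → y n ∈ C := fun n hn => hmeanC (x n) (hxC n hn) (tn n) (htn0 n)
  -- parameter bounds
  have hαnn : ∀ n, 0 ≤ α n := fun n => (hα n).1
  have hbdd1 : IsBoundedUnder (· ≤ ·) atTop α :=
    isBoundedUnder_of_eventually_le (Eventually.of_forall (fun n => (hα n).2))
  have hbdd2 : IsBoundedUnder (· ≥ ·) atTop α :=
    isBoundedUnder_of_eventually_le (α := ℝᵒᵈ) (Eventually.of_forall hαnn)
  have ha : 0 < liminf α atTop / 2 := by linarith
  have hev_a : ∀ᶠ n in atTop, liminf α atTop / 2 < α n :=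
    eventually_lt_of_lt_liminf (by linarith) hbdd2
  have hb1 : (limsup α atTop + 1)/2 < 1 := by linarith
  have hev_b : ∀ᶠ n in atTop, α n < (limsup α atTop + 1)/2 :=
    eventually_lt_of_limsup_lt (by linarith) hbdd1
  obtain ⟨Na, hNa⟩ := eventually_atTop.mp (hev_a.and hev_b)
  set n0 : ℕ := max 1 Na with hn0def
  have hn0 : 1 ≤ n0 := le_max_left _ _
  have hab : ∀ n, n0 ≤ n →
      (liminf α atTop / 2) ≤ α n ∧ α n ≤ (limsup α atTop + 1)/2 := by
    intro n hn
    have := hNa n (le_trans (le_max_right _ _) hn)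
    exact ⟨this.1.le, this.2.le⟩
  -- drift control
  set cd : ℕ → ℝ := fun n => 2*M*|1 - tn n / tn (n+1)| + 2*M*|1 - tn (n+1) / tn n| with hcd
  have hcd0 : ∀ n, 0 ≤ cd n := by intro n; positivity
  have hcdlim : Tendsto cd atTop (nhds 0) := by
    have hquot : Tendsto (fun n => tn n / tn (n+1)) atTop (nhds 1) := by
      have h1 : Tendsto (fun n => (tn (n+1) / tn n)⁻¹) atTop (nhds 1⁻¹) :=
        htnratio.inv₀ one_ne_zero
      rw [inv_one] at h1
      have e : (fun n => tn n / tn (n+1)) = fun n => (tn (n+1) / tn n)⁻¹ := by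
        funext n; rw [inv_div]
      rw [e]; exact h1
    have t1 : Tendsto (fun n => 2*M*|1 - tn n / tn (n+1)|) atTop (nhds 0) := by
      have h2 := (tendsto_const_nhds (x := (1:ℝ))).sub hquot
      rw [sub_self] at h2
      have h3 := h2.abs
      rw [abs_zero] at h3
      simpa using h3.const_mul (2*M)
    have t2 : Tendsto (fun n => 2*M*|1 - tn (n+1) / tn n|) atTop (nhds 0) := by
      have h2 := (tendsto_const_nhds (x := (1:ℝ))).sub htnratio
      rw [sub_self] at h2
      have h3 := h2.abs
      rw [abs_zero] at h3
      simpa using h3.const_mul (2*M)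
    simpa using t1.add t2
  have hdrift : ∀ n, n0 ≤ n → ‖y (n+1) - y n‖ ≤ ‖x (n+1) - x n‖ + cd n := by
    intro n hn
    have hn1 : 1 ≤ n := le_trans hn0 hn
    have hx_n := hxC n hn1
    have hx_n1 := hxC (n+1) (by omega)
    have e1 : ‖mean (tn (n+1)) (x (n+1)) - mean (tn (n+1)) (x n)‖ ≤ ‖x (n+1) - x n‖ :=
      hmeanlip _ hx_n1 _ hx_n _ (htn0 (n+1))
    have e2 : ‖mean (tn (n+1)) (x n) - mean (tn n) (x n)‖ ≤ cd n := by
      rcases le_total (tn n) (tn (n+1)) with hc | hc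
      · have h5 := hmeanscale (x n) hx_n (tn n) (tn (n+1)) (htn0 n) hc
        have habs : 2*M*(1 - tn n / tn (n+1)) ≤ cd n := by
          rw [hcd]
          have h3 : (1 - tn n / tn (n+1)) ≤ |1 - tn n / tn (n+1)| := le_abs_self _
          have h4 : (0:ℝ) ≤ 2*M*|1 - tn (n+1) / tn n| := by positivity
          nlinarith [abs_nonneg (1 - tn n / tn (n+1))]
        exact h5.trans habs
      · have h5 := hmeanscale (x n) hx_n (tn (n+1)) (tn n) (htn0 (n+1)) hc
        rw [norm_sub_rev]
        have habs : 2*M*(1 - tn (n+1) / tn n) ≤ cd n := by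
          rw [hcd]
          have h3 : (1 - tn (n+1) / tn n) ≤ |1 - tn (n+1) / tn n| := le_abs_self _
          have h4 : (0:ℝ) ≤ 2*M*|1 - tn n / tn (n+1)| := by positivity
          nlinarith [abs_nonneg (1 - tn (n+1) / tn n)]
        exact h5.trans habs
    calc ‖y (n+1) - y n‖
        ≤ ‖y (n+1) - mean (tn (n+1)) (x n)‖ + ‖mean (tn (n+1)) (x n) - y n‖ :=
          norm_sub_le_norm_sub_add_norm_sub _ _ _
      _ ≤ ‖x (n+1) - x n‖ + cd n := add_le_add e1 e2
  -- apply the Mann lemma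
  have hMx' : ∀ n, n0 ≤ n → ‖x n‖ ≤ M := fun n hn => hM _ (hxC n (le_trans hn0 hn))
  have hMy' : ∀ n, n0 ≤ n → ‖y n‖ ≤ M := fun n hn => hM _ (hyCmem n (le_trans hn0 hn))
  have hfreq := mann_frequently_small x y α cd M (liminf α atTop / 2)
    ((limsup α atTop + 1)/2) n0 ha hb1 hab hMx' hMy' hn0 hrec' hdrift hcd0 hcdlim
  -- extract a subsequence along which the residuals tend to 0
  have H : ∀ k : ℕ, ∀ N : ℕ, ∃ n, N ≤ n ∧ n0 ≤ n ∧ ‖y n - x n‖ < 1/((k:ℝ)+1) :=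
    fun k N => hfreq (1/((k:ℝ)+1)) (by positivity) N
  set ν : ℕ → ℕ := fun k =>
    Nat.rec (H 0 0).choose (fun k' prev => (H (k'+1) (prev+1)).choose) k with hν
  have hν0 : ∀ k, ν (k+1) = (H (k+1) (ν k + 1)).choose := fun k => rfl
  have hνspec : ∀ k, n0 ≤ ν k ∧ ‖y (ν k) - x (ν k)‖ < 1/((k:ℝ)+1) := by
    intro k
    cases k with
    | zero => exact ⟨(H 0 0).choose_spec.2.1, (H 0 0).choose_spec.2.2⟩
    | succ k =>
      rw [hν0]
      exact ⟨(H (k+1) (ν k + 1)).choose_spec.2.1, (H (k+1) (ν k+1)).choose_spec.2.2⟩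
  have hνmono : StrictMono ν := by
    apply strictMono_nat_of_lt_succ
    intro k
    have := (H (k+1) (ν k + 1)).choose_spec.1
    rw [hν0]
    omega
  have hr0 : Tendsto (fun k => ‖y (ν k) - x (ν k)‖) atTop (nhds 0) := by
    apply squeeze_zero (fun k => norm_nonneg _) (fun k => (hνspec k).2.le)
    exact tendsto_one_div_add_atTop_nhds_zero_nat
  -- cluster point of the subsequence
  obtain ⟨w, hwC, φ, hφmono, hφlim⟩ := hCcpt.tendsto_subseq (x := fun k => x (ν k))
    (fun k => hxC (ν k) (le_trans hn0 (hνspec k).1))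
  set ns : ℕ → ℕ := ν ∘ φ with hns
  have hnsmono : StrictMono ns := hνmono.comp hφmono
  set sq : ℕ → ℝ := fun k => tn (ns k) with hsq
  have hsq0 : ∀ k, 0 < sq k := fun k => htn0 _
  have hsqinf : Tendsto sq atTop atTop := htninf.comp hnsmono.tendsto_atTop
  have hxw : Tendsto (fun k => x (ns k)) atTop (nhds w) := hφlim
  have hrw : Tendsto (fun k => ‖y (ns k) - x (ns k)‖) atTop (nhds 0) :=
    hr0.comp hφmono.tendsto_atTop
  -- the means of w converge to w along sq
  have hmw : Tendsto (fun k => (sq k)⁻¹ • ∫ u in (0:ℝ)..sq k, T u w) atTop (nhds w) := by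
    rw [tendsto_iff_norm_sub_tendsto_zero]
    apply squeeze_zero (f := fun k => ‖((sq k)⁻¹ • ∫ u in (0:ℝ)..sq k, T u w) - w‖)
      (g := fun k => 2*‖x (ns k) - w‖ + ‖y (ns k) - x (ns k)‖) (fun k => norm_nonneg _)
    · intro k
      have hnsk1 : 1 ≤ ns k := le_trans hn0 (hνspec (φ k)).1
      have h1 : ‖mean (sq k) w - mean (sq k) (x (ns k))‖ ≤ ‖w - x (ns k)‖ :=
        hmeanlip w hwC _ (hxC _ hnsk1) _ (hsq0 k)
      have h2 : mean (sq k) (x (ns k)) = y (ns k) := rfl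
      have tri1 := norm_sub_le_norm_sub_add_norm_sub (mean (sq k) w) (y (ns k)) w
      have tri2 := norm_sub_le_norm_sub_add_norm_sub (y (ns k)) (x (ns k)) w
      have h3 : ‖mean (sq k) w - y (ns k)‖ ≤ ‖w - x (ns k)‖ := by rw [← h2]; exact h1
      have h4 : ‖w - x (ns k)‖ = ‖x (ns k) - w‖ := norm_sub_rev _ _
      show ‖mean (sq k) w - w‖ ≤ 2*‖x (ns k) - w‖ + ‖y (ns k) - x (ns k)‖
      calc ‖mean (sq k) w - w‖ ≤ ‖mean (sq k) w - y (ns k)‖ + ‖y (ns k) - w‖ := tri1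
        _ ≤ ‖x (ns k) - w‖ + (‖y (ns k) - x (ns k)‖ + ‖x (ns k) - w‖) := by
            have h3' : ‖mean (sq k) w - y (ns k)‖ ≤ ‖x (ns k) - w‖ := by rw [← h4]; exact h3
            exact add_le_add h3' tri2
        _ = 2*‖x (ns k) - w‖ + ‖y (ns k) - x (ns k)‖ := by ring
    · have t1 : Tendsto (fun k => ‖x (ns k) - w‖) atTop (nhds 0) :=
        tendsto_iff_norm_sub_tendsto_zero.mp hxw
      have := (t1.const_mul 2).add hrw
      simpa using this
  -- w is a common fixed point
  have hfix : ∀ u : ℝ, 0 ≤ u → T u w = w :=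
    core_fixed C hCcpt T hmaps hne hsg hcont w hwC sq hsq0 hsqinf hmw
  -- Fejér monotonicity
  have hmeanw : ∀ τ : ℝ, 0 < τ → mean τ w = w := by
    intro τ hτ
    rw [hmean_def]
    simp only []
    have e : (∫ u in (0:ℝ)..τ, T u w) = ∫ _u in (0:ℝ)..τ, w := by
      apply intervalIntegral.integral_congr
      intro u hu
      rw [Set.uIcc_of_le hτ.le] at hu
      exact hfix u hu.1
    rw [e, intervalIntegral.integral_const, sub_zero, smul_smul,
      inv_mul_cancel₀ hτ.ne', one_smul]
  have hq : ∀ n, 1 ≤ n → ‖x (n+1) - w‖ ≤ ‖x n - w‖ := by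
    intro n hn
    have hyw : ‖y n - w‖ ≤ ‖x n - w‖ := by
      have h5 := hmeanlip (x n) (hxC n hn) w hwC (tn n) (htn0 n)
      rw [hmeanw (tn n) (htn0 n)] at h5
      exact h5
    have e1 : x (n+1) - w = α n • (y n - w) + (1 - α n) • (x n - w) := by
      rw [hrec' n hn]; module
    rw [e1]
    calc ‖α n • (y n - w) + (1 - α n) • (x n - w)‖
        ≤ ‖α n • (y n - w)‖ + ‖(1 - α n) • (x n - w)‖ := norm_add_le _ _
      _ = α n * ‖y n - w‖ + (1 - α n) * ‖x n - w‖ := by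
          rw [norm_smul, norm_smul, Real.norm_eq_abs, Real.norm_eq_abs,
            abs_of_nonneg (hα n).1, abs_of_nonneg (by linarith [(hα n).2])]
      _ ≤ α n * ‖x n - w‖ + (1 - α n) * ‖x n - w‖ := by
          have := mul_le_mul_of_nonneg_left hyw (hα n).1
          linarith
      _ = ‖x n - w‖ := by ring
  have hqmono : ∀ m n, 1 ≤ m → m ≤ n → ‖x n - w‖ ≤ ‖x m - w‖ := by
    intro m n hm hmn
    induction n, hmn using Nat.le_induction with
    | base => exact le_rfl
    | succ n hmn ih => exact (hq n (le_trans hm hmn)).trans ih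
  -- conclusion
  refine ⟨w, hwC, hfix, ?_⟩
  rw [tendsto_iff_norm_sub_tendsto_zero]
  rw [Metric.tendsto_atTop]
  intro ε hε
  have hxw' : Tendsto (fun k => ‖x (ns k) - w‖) atTop (nhds 0) :=
    tendsto_iff_norm_sub_tendsto_zero.mp hxw
  obtain ⟨k, hk⟩ := (hxw'.eventually_lt_const hε).exists
  refine ⟨ns k, ?_⟩
  intro n hn
  rw [Real.dist_eq, sub_zero, abs_of_nonneg (norm_nonneg _)]
  have h1 : 1 ≤ ns k := le_trans hn0 (hνspec (φ k)).1
  exact lt_of_le_of_lt (hqmono (ns k) n h1 hn) hk
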